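/- arXiv:2508.13760 — 4 statements merged into one kernel-verified Lean document; each statement's English description precedes it below -/
import Mathlib

section
/- Every element r ∈ R_∞ has a unique decomposition into a product of pairwise disjoint quasi-cycles, nontrivial usual cycles, and a product of trivial quasi-cycles (idempotents with one-point-deleted domains); concretely, r = (∏_{a ∈ D(r)\I(r)} {}^a q) · (∏_i c_i) · d, where the supports of all factors are pairwise disjoint. -/
/-- Partial maps of `ℕ`, modeling elements of the symmetric inverse semigroup `R_∞`. -/
def PB := ℕ → Option ℕ

/-- Composition (semigroup multiplication) of partial maps: `(a * b)(x) = a(b(x))`. -/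
def PB.mul (a b : PB) : PB := fun x => (b x).bind a

/-- The identity partial bijection. -/
def PB.one : PB := fun x => some x

/-- `g` is a genuine element of `R_∞`: injective and the identity outside a finite set. -/
def PB.Valid (g : PB) : Prop :=
  (∀ x y z, g x = some z → g y = some z → x = y) ∧ {x | g x ≠ some x}.Finite

/-- The support of `r ∈ R_∞`: points of the domain moved by `r`, together with the
complement of the domain. -/
def PB.supp (g : PB) : Set ℕ := {x | g x ≠ some x}

/-- A trivial quasi-cycle `ε_{a}`: the identity partial bijection with domain `ℕ \ {a}`. -/
def IsTrivialQC (q : PB) : Prop := ∃ a, q a = none ∧ ∀ x, x ≠ a → q x = some x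

/-- A nontrivial quasi-cycle: on distinct points `v 0, …, v (n-1)` (`n ≥ 2`) it sends
`v i ↦ v (i+1)`, is undefined at the last point, and is the identity elsewhere. -/
def IsQC (q : PB) : Prop :=
  ∃ (n : ℕ) (v : ℕ → ℕ), 2 ≤ n ∧ Set.InjOn v (Set.Iio n) ∧
    (∀ i, i + 1 < n → q (v i) = some (v (i + 1))) ∧ q (v (n - 1)) = none ∧
    ∀ x, (∀ i < n, x ≠ v i) → q x = some x

/-- A nontrivial usual cycle on distinct points `v 0, …, v (n-1)` (`n ≥ 2`). -/
def IsCyc (c : PB) : Prop :=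
  ∃ (n : ℕ) (v : ℕ → ℕ), 2 ≤ n ∧ Set.InjOn v (Set.Iio n) ∧
    (∀ i, i + 1 < n → c (v i) = some (v (i + 1))) ∧ c (v (n - 1)) = some (v 0) ∧
    ∀ x, (∀ i < n, x ≠ v i) → c x = some x

namespace PBaux

open PB

/-- Iteration of a partial map. -/
def iter (g : PB) : ℕ → ℕ → Option ℕ
  | 0, x => some x
  | (k+1), x => (iter g k x).bind g

lemma iter_zero (g : PB) (x : ℕ) : iter g 0 x = some x := rfl
lemma iter_succ (g : PB) (k x : ℕ) : iter g (k+1) x = (iter g k x).bind g := rfl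

lemma iter_add (g : PB) (a b x : ℕ) :
    iter g (a + b) x = (iter g a x).bind (iter g b) := by
  induction b with
  | zero =>
      simp only [Nat.add_zero]
      cases h : iter g a x <;> simp [h, iter_zero]
  | succ b ih =>
      show iter g ((a+b)+1) x = _
      rw [iter_succ, ih]
      cases iter g a x with
      | none => rfl
      | some w => rfl

lemma iter_some_of_add (g : PB) {a b x : ℕ} {y : ℕ}
    (h : iter g (a + b) x = some y) : ∃ w, iter g a x = some w := by
  rw [iter_add] at h
  cases hw : iter g a x with
  | none => rw [hw] at h; simp at h
  | some w => exact ⟨w, rfl⟩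

lemma iter_inj (g : PB) (hg : g.Valid) :
    ∀ (k : ℕ) {a b c : ℕ}, iter g k a = some c → iter g k b = some c → a = b := by
  intro k
  induction k with
  | zero => intro a b c ha hb; simp [iter_zero] at ha hb; omega
  | succ k ih =>
      intro a b c ha hb
      rw [iter_succ] at ha hb
      cases hwa : iter g k a with
      | none => rw [hwa] at ha; cases ha
      | some wa =>
        cases hwb : iter g k b with
        | none => rw [hwb] at hb; cases hb
        | some wb =>
          rw [hwa] at ha; rw [hwb] at hb
          erw [Option.bind_some] at ha hb
          have := hg.1 wa wb c ha hb
          subst this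
          exact ih hwa hwb

lemma iter_of_not_mem_supp (g : PB) {x : ℕ} (hx : x ∉ g.supp) (k : ℕ) :
    iter g k x = some x := by
  have hgx : g x = some x := not_not.mp hx
  induction k with
  | zero => rfl
  | succ k ih => rw [iter_succ, ih]; exact hgx

/-- forward closedness of the support -/
lemma supp_fwd (g : PB) (hg : g.Valid) {x y : ℕ} (hx : x ∈ g.supp)
    (h : g x = some y) : y ∈ g.supp := by
  intro hy
  have := hg.1 x y y h hy
  subst this
  exact hx h

/-- Pigeonhole: if iteration from a support point never dies, it returns. -/
lemma exists_return (g : PB) (hg : g.Valid) {x : ℕ} (hx : x ∈ g.supp)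
    (hnone : ∀ k, iter g k x ≠ none) : ∃ k, 1 ≤ k ∧ iter g k x = some x := by
  classical
  set u : ℕ → ℕ := fun k => (iter g k x).getD 0 with hu
  have hsome : ∀ k, iter g k x = some (u k) := by
    intro k
    cases h : iter g k x with
    | none => exact absurd h (hnone k)
    | some w => simp [hu, h]
  have hmem : ∀ k, u k ∈ g.supp := by
    intro k
    induction k with
    | zero =>
        have h0 : some x = some (u 0) := by rw [← iter_zero g x]; exact hsome 0
        rw [← Option.some.inj h0]; exact hx
    | succ k ih =>
        have h1 := hsome (k+1)
        rw [iter_succ, hsome k] at h1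
        erw [Option.bind_some] at h1
        exact supp_fwd g hg ih h1
  obtain ⟨i, -, j, -, hij, huv⟩ :=
    Set.infinite_univ.exists_ne_map_eq_of_mapsTo (f := u)
      (fun k _ => hmem k) hg.2
  wlog hlt : i < j generalizing i j
  · exact this j i hij.symm huv.symm (by omega)
  have h1 : iter g j x = some (u i) := by rw [hsome j, huv]
  have h2 : iter g j x = (iter g (j - i) x).bind (iter g i) := by
    rw [← iter_add]; congr 1; omega
  refine ⟨j - i, by omega, ?_⟩
  rw [hsome (j - i)] at h2 ⊢
  rw [h1] at h2
  simp at h2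
  have := iter_inj g hg i h2.symm (hsome i)
  rw [this]


attribute [local instance] Classical.propDecidable

/-- Existence of the orbit sequence through a support point. -/
lemma orbit_seq (g : PB) (hg : g.Valid) {x : ℕ} (hx : x ∈ g.supp) :
    ∃ (n : ℕ) (v : ℕ → ℕ), 1 ≤ n ∧ Set.InjOn v (Set.Iio n) ∧ (∃ i < n, v i = x) ∧
      (∀ i < n, v i ∈ g.supp) ∧
      (∀ i, i + 1 < n → g (v i) = some (v (i + 1))) ∧
      ((g (v (n - 1)) = none ∧ ∀ z, g z ≠ some (v 0)) ∨
        (g (v (n - 1)) = some (v 0) ∧ 2 ≤ n)) := by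
  classical
  by_cases hret : ∃ k, 1 ≤ k ∧ iter g k x = some x
  · -- cyclic case
    set n := Nat.find hret with hndef
    obtain ⟨hn1, hniter⟩ := Nat.find_spec hret
    rw [← hndef] at hn1 hniter
    have hmin : ∀ k, k < n → ¬(1 ≤ k ∧ iter g k x = some x) := fun k hk => Nat.find_min hret hk
    have hsome : ∀ i, i ≤ n → ∃ w, iter g i x = some w := by
      intro i hi
      have : iter g (i + (n - i)) x = some x := by rwa [show i + (n-i) = n by omega]
      exact iter_some_of_add g this
    set v : ℕ → ℕ := fun i => (iter g i x).getD 0 with hv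
    have hvs : ∀ i, i ≤ n → iter g i x = some (v i) := by
      intro i hi
      obtain ⟨w, hw⟩ := hsome i hi
      simp [hv, hw]
    have hv0 : v 0 = x := by
      have := hvs 0 (by omega); rw [iter_zero] at this; exact (Option.some.inj this).symm
    have hedge : ∀ i, i + 1 ≤ n → g (v i) = some (v (i + 1)) := by
      intro i hi
      have h1 := hvs (i+1) hi
      rw [iter_succ, hvs i (by omega)] at h1
      exact h1
    have hn2 : 2 ≤ n := by
      rcases Nat.lt_or_ge n 2 with h | h
      · exfalso
        have : n = 1 := by omega
        rw [this] at hniter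
        rw [iter_succ, iter_zero] at hniter
        exact hx hniter
      · exact h
    refine ⟨n, v, by omega, ?_, ⟨0, by omega, hv0⟩, ?_, fun i hi => hedge i (by omega), ?_⟩
    · -- InjOn
      have key : ∀ i j, i < j → j < n → v i ≠ v j := by
        intro i j hij hjn heq
        have h1 : iter g j x = some (v i) := by rw [hvs j (by omega), heq]
        have h2 : iter g j x = (iter g (j - i) x).bind (iter g i) := by
          rw [← iter_add]; congr 1; omega
        rw [hvs (j-i) (by omega)] at h2
        erw [Option.bind_some] at h2
        have h3 : iter g i (v (j - i)) = some (v i) := by rw [← h2, h1]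
        have h4 := iter_inj g hg i h3 (hvs i (by omega))
        have h5 : iter g (j - i) x = some x := by rw [hvs (j-i) (by omega), h4]
        exact hmin (j - i) (by omega) ⟨by omega, h5⟩
      intro i hi j hj heq
      rcases Nat.lt_trichotomy i j with h | h | h
      · exact absurd heq (key i j h hj)
      · exact h
      · exact absurd heq.symm (key j i h hi)
    · -- supp membership
      intro i hi
      induction i with
      | zero => rwa [hv0]
      | succ i ih =>
          exact supp_fwd g hg (ih (by omega)) (hedge i (by omega))
    · refine Or.inr ⟨?_, hn2⟩
      have hvn : v n = x := Option.some.inj ((hvs n le_rfl).symm.trans hniter)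
      rw [hedge (n-1) (by omega), show n - 1 + 1 = n by omega, hvn, hv0]
  · -- chain case
    set pre : PB := fun y => if h : ∃ z, g z = some y then some (Classical.choose h) else none
      with hpre
    have hpre1 : ∀ y z, pre y = some z → g z = some y := by
      intro y z h
      rw [hpre] at h
      simp only at h
      split at h
      · rename_i hh
        rw [← Option.some.inj h]
        exact Classical.choose_spec hh
      · exact absurd h (by simp)
    have hpre2 : ∀ y, pre y = none → ∀ z, g z ≠ some y := by
      intro y h z hz
      rw [hpre] at h
      simp only at h
      split at h
      · exact absurd h (by simp)
      · rename_i hh; exact hh ⟨z, hz⟩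
    have hpreValid : pre.Valid := by
      constructor
      · intro a b c ha hb
        have := (hpre1 a c ha).symm.trans (hpre1 b c hb)
        exact Option.some.inj this
      · refine hg.2.subset ?_
        intro y hy
        by_contra hyg
        have hgy : g y = some y := not_not.mp hyg
        have hex : ∃ z, g z = some y := ⟨y, hgy⟩
        have hcy : Classical.choose hex = y := hg.1 _ y y (Classical.choose_spec hex) hgy
        apply hy
        show pre y = some y
        rw [hpre]
        simp only [dif_pos hex, hcy]
    have hconv : ∀ k y z, iter pre k y = some z → iter g k z = some y := by
      intro k
      induction k with
      | zero => intro y z h; rw [iter_zero] at h ⊢; rw [Option.some.inj h]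
      | succ k ih =>
          intro y z h
          rw [iter_succ] at h
          cases hw : iter pre k y with
          | none => rw [hw] at h; exact absurd h (by intro h'; cases h')
          | some w =>
              rw [hw] at h
              erw [Option.bind_some] at h
              have hgz : g z = some w := hpre1 w z h
              have := ih y w hw
              have : iter g (1 + k) z = some y := by
                rw [iter_add, iter_succ, iter_zero]
                exact (show (g z).bind (iter g k) = some y by rw [hgz]; exact this)
              rwa [Nat.add_comm] at this
    have hxpre : x ∈ pre.supp := by
      intro hc
      exact hx (hpre1 x x hc)
    have hnoneex : ∃ m, iter pre m x = none := by
      by_contra hc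
      push_neg at hc
      obtain ⟨k, hk1, hkret⟩ := exists_return pre hpreValid hxpre hc
      exact hret ⟨k, hk1, hconv k x x hkret⟩
    set m := Nat.find hnoneex with hmdef
    have hmnone : iter pre m x = none := Nat.find_spec hnoneex
    have hmmin : ∀ i, i < m → iter pre i x ≠ none := fun i hi => Nat.find_min hnoneex hi
    have hm1 : 1 ≤ m := by
      rcases Nat.eq_zero_or_pos m with h | h
      · rw [h, iter_zero] at hmnone; exact absurd hmnone (by simp)
      · omega
    set b : ℕ → ℕ := fun i => (iter pre i x).getD 0 with hb
    have hbs : ∀ i, i < m → iter pre i x = some (b i) := by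
      intro i hi
      cases h : iter pre i x with
      | none => exact absurd h (hmmin i hi)
      | some w => simp [hb, h]
    set a := b (m - 1) with ha
    have hta : iter g (m - 1) a = some x := hconv (m-1) x a (hbs (m-1) (by omega))
    have hnopre : ∀ z, g z ≠ some a := by
      apply hpre2
      have : iter pre m x = (iter pre (m-1) x).bind pre := by
        rw [← iter_succ, show m - 1 + 1 = m by omega]
      rw [hbs (m-1) (by omega)] at this
      exact this.symm.trans hmnone
    have hasupp : a ∈ g.supp := by
      by_contra hc
      have := iter_of_not_mem_supp g hc (m - 1)
      rw [hta] at this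
      exact hc (Option.some.inj this ▸ hx)
    have hnret : ∀ k, 1 ≤ k → iter g k a ≠ some a := by
      intro k hk1 hk
      have : iter g ((k-1)+1) a = some a := by rwa [show k - 1 + 1 = k by omega]
      rw [iter_succ] at this
      cases hw : iter g (k-1) a with
      | none => rw [hw] at this; exact absurd this (by intro h'; cases h')
      | some w =>
          rw [hw] at this
          erw [Option.bind_some] at this
          exact hnopre w this
    have hnoneex2 : ∃ k, iter g k a = none := by
      by_contra hc
      push_neg at hc
      obtain ⟨k, hk1, hkret⟩ := exists_return g hg hasupp hc
      exact hnret k hk1 hkret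
    set n := Nat.find hnoneex2 with hndef
    have hnnone : iter g n a = none := Nat.find_spec hnoneex2
    have hnmin : ∀ i, i < n → iter g i a ≠ none := fun i hi => Nat.find_min hnoneex2 hi
    have hn1 : 1 ≤ n := by
      rcases Nat.eq_zero_or_pos n with h | h
      · rw [h, iter_zero] at hnnone; exact absurd hnnone (by simp)
      · omega
    set v : ℕ → ℕ := fun i => (iter g i a).getD 0 with hv
    have hvs : ∀ i, i < n → iter g i a = some (v i) := by
      intro i hi
      cases h : iter g i a with
      | none => exact absurd h (hnmin i hi)
      | some w => simp [hv, h]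
    have hv0 : v 0 = a := by
      have := hvs 0 (by omega); rw [iter_zero] at this; exact (Option.some.inj this).symm
    have hedge : ∀ i, i + 1 < n → g (v i) = some (v (i + 1)) := by
      intro i hi
      have h1 := hvs (i+1) hi
      rw [iter_succ, hvs i (by omega)] at h1
      exact h1
    have htn : m - 1 < n := by
      by_contra hc
      push_neg at hc
      have : iter g (m-1) a = (iter g n a).bind (iter g ((m-1) - n)) := by
        rw [← iter_add]; congr 1; omega
      rw [hnnone] at this
      rw [hta] at this
      exact absurd this (by simp)
    refine ⟨n, v, hn1, ?_, ⟨m - 1, htn, ?_⟩, ?_, hedge, ?_⟩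
    · -- InjOn
      have key : ∀ i j, i < j → j < n → v i ≠ v j := by
        intro i j hij hjn heq
        have h1 : iter g j a = some (v i) := by rw [hvs j hjn, heq]
        have h2 : iter g j a = (iter g (j - i) a).bind (iter g i) := by
          rw [← iter_add]; congr 1; omega
        rw [hvs (j-i) (by omega)] at h2
        erw [Option.bind_some] at h2
        have h3 : iter g i (v (j - i)) = some (v i) := by rw [← h2, h1]
        have h4 := iter_inj g hg i h3 (hvs i (by omega))
        have h5 : iter g (j - i) a = some a := by rw [hvs (j-i) (by omega), h4]
        have h6 : iter g ((j-i-1)+1) a = some a := by rwa [show j - i - 1 + 1 = j - i by omega]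
        rw [iter_succ, hvs (j-i-1) (by omega)] at h6
        erw [Option.bind_some] at h6
        exact hnopre _ h6
      intro i hi j hj heq
      rcases Nat.lt_trichotomy i j with h | h | h
      · exact absurd heq (key i j h hj)
      · exact h
      · exact absurd heq.symm (key j i h hi)
    · -- v (m-1) = x
      exact Option.some.inj ((hvs (m-1) htn).symm.trans hta)
    · -- supp membership
      intro i hi
      induction i with
      | zero => rwa [hv0]
      | succ i ih =>
          exact supp_fwd g hg (ih (by omega)) (hedge i (by omega))
    · refine Or.inl ⟨?_, by rwa [hv0]⟩
      have : iter g n a = (iter g (n-1) a).bind g := by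
        rw [← iter_succ, show n - 1 + 1 = n by omega]
      rw [hvs (n-1) (by omega), hnnone] at this
      erw [Option.bind_some] at this
      exact this.symm

/-- The shape predicate for factors. -/
def Shaped (q : PB) : Prop := IsTrivialQC q ∨ IsQC q ∨ IsCyc q

/-- Extract a single orbit factor through a support point. -/
lemma orbit (g : PB) (hg : g.Valid) {x : ℕ} (hx : x ∈ g.supp) :
    ∃ (O : Set ℕ) (q : PB), Shaped q ∧ q.supp = O ∧ x ∈ O ∧ O ⊆ g.supp ∧
      (∀ z ∈ O, q z = g z) ∧ (∀ z y, g z = some y → y ∈ O → z ∈ O) := by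
  classical
  obtain ⟨n, v, hn1, hinj, ⟨i0, hi0, hvx⟩, hsupp, hedge, hend⟩ := orbit_seq g hg hx
  set O : Set ℕ := v '' Set.Iio n with hO
  set q : PB := fun z => if z ∈ O then g z else some z with hq
  have hqO : ∀ z ∈ O, q z = g z := by
    intro z hz; rw [hq]; simp only [if_pos hz]
  have hqO' : ∀ z, z ∉ O → q z = some z := by
    intro z hz; rw [hq]; simp only [if_neg hz]
  have hmemO : ∀ i, i < n → v i ∈ O := by
    intro i hi; exact ⟨i, hi, rfl⟩
  have hnotO : ∀ z, (∀ i < n, z ≠ v i) → z ∉ O := by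
    intro z hz ⟨i, hi, hvi⟩
    exact hz i hi hvi.symm
  have hOsupp : O ⊆ g.supp := by
    rintro z ⟨i, hi, rfl⟩
    exact hsupp i hi
  have hsuppq : q.supp = O := by
    ext z
    constructor
    · intro hz
      by_contra hzO
      exact hz (hqO' z hzO)
    · intro hz
      show q z ≠ some z
      rw [hqO z hz]
      exact hOsupp hz
  have hbwd : ∀ z y, g z = some y → y ∈ O → z ∈ O := by
    rintro z y hzy ⟨i, hi, rfl⟩
    have hi' : i < n := hi
    rcases hend with ⟨hnone, hnopre⟩ | ⟨hcyc, hn2⟩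
    · -- chain
      rcases Nat.eq_zero_or_pos i with h0 | h0
      · subst h0; exact absurd hzy (hnopre z)
      · have he := hedge (i-1) (by omega)
        have := hg.1 z (v (i-1)) (v i) hzy (by rwa [show i - 1 + 1 = i by omega] at he)
        rw [this]; exact hmemO (i-1) (by omega)
    · -- cycle
      rcases Nat.eq_zero_or_pos i with h0 | h0
      · subst h0
        have := hg.1 z (v (n-1)) (v 0) hzy hcyc
        rw [this]; exact hmemO (n-1) (by omega)
      · have he := hedge (i-1) (by omega)
        have := hg.1 z (v (i-1)) (v i) hzy (by rwa [show i - 1 + 1 = i by omega] at he)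
        rw [this]; exact hmemO (i-1) (by omega)
  refine ⟨O, q, ?_, hsuppq, ⟨i0, hi0, hvx⟩, hOsupp, hqO, hbwd⟩
  rcases hend with ⟨hnone, hnopre⟩ | ⟨hcyc, hn2⟩
  · rcases Nat.lt_or_ge n 2 with h2 | h2
    · -- trivial QC
      have hn : n = 1 := by omega
      left
      refine ⟨v 0, ?_, ?_⟩
      · rw [hqO (v 0) (hmemO 0 (by omega))]
        rw [hn] at hnone; exact hnone
      · intro z hz
        apply hqO'
        apply hnotO
        intro i hi
        rw [hn] at hi
        have : i = 0 := by omega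
        rw [this]; exact hz
    · -- QC
      right; left
      refine ⟨n, v, h2, fun i hi j hj hij => hinj hi hj hij, ?_, ?_, ?_⟩
      · intro i hi
        rw [hqO (v i) (hmemO i (by omega))]; exact hedge i hi
      · rw [hqO (v (n-1)) (hmemO (n-1) (by omega))]; exact hnone
      · intro z hz; exact hqO' z (hnotO z hz)
  · -- cycle
    right; right
    refine ⟨n, v, hn2, fun i hi j hj hij => hinj hi hj hij, ?_, ?_, ?_⟩
    · intro i hi
      rw [hqO (v i) (hmemO i (by omega))]; exact hedge i hi
    · rw [hqO (v (n-1)) (hmemO (n-1) (by omega))]; exact hcyc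
    · intro z hz; exact hqO' z (hnotO z hz)

lemma empty_decomp (g : PB) (hsupp : g.supp = ∅) : g = PB.one := by
  funext z
  have : z ∉ g.supp := by rw [hsupp]; exact Set.notMem_empty z
  exact not_not.mp this

lemma exists_decomp_aux : ∀ (N : ℕ) (g : PB), g.Valid → g.supp.ncard ≤ N →
    ∃ L : List PB, (∀ q ∈ L, Shaped q) ∧
      L.Pairwise (fun p q => Disjoint (PB.supp p) (PB.supp q)) ∧
      L.foldr PB.mul PB.one = g ∧ (∀ q ∈ L, q.supp ⊆ g.supp) := by
  intro N
  induction N with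
  | zero =>
      intro g hg hcard
      have hsupp : g.supp = ∅ := (Set.ncard_eq_zero (hs := hg.2)).mp (Nat.le_zero.mp hcard)
      refine ⟨[], by simp, by simp, ?_, by simp⟩
      simp only [List.foldr_nil]
      exact (empty_decomp g hsupp).symm
  | succ N ih =>
      intro g hg hcard
      classical
      rcases Set.eq_empty_or_nonempty g.supp with hemp | ⟨x, hx⟩
      · refine ⟨[], by simp, by simp, ?_, by simp⟩
        simp only [List.foldr_nil]
        exact (empty_decomp g hemp).symm
      obtain ⟨O, q, hshape, hsuppq, hxO, hOsupp, hqg, hbwd⟩ := orbit g hg hx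
      set g' : PB := fun z => if z ∈ O then some z else g z with hg'
      have hg'O : ∀ z ∈ O, g' z = some z := fun z hz => by
        rw [hg']; simp only [if_pos hz]
      have hg'nO : ∀ z, z ∉ O → g' z = g z := fun z hz => by
        rw [hg']; simp only [if_neg hz]
      have hsuppg' : PB.supp g' = g.supp \ O := by
        ext z
        constructor
        · intro hzz
          have hzz' : g' z ≠ some z := hzz
          have hzO : z ∉ O := fun hzO => hzz' (hg'O z hzO)
          rw [hg'nO z hzO] at hzz'
          exact ⟨hzz', hzO⟩
        · rintro ⟨h1, h2⟩
          show g' z ≠ some z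
          rw [hg'nO z h2]
          exact h1
      have hg'valid : PB.Valid g' := by
        constructor
        · intro a b c ha hb
          by_cases haO : a ∈ O <;> by_cases hbO : b ∈ O
          · rw [hg'O a haO] at ha; rw [hg'O b hbO] at hb
            exact (Option.some.inj ha).trans (Option.some.inj hb).symm
          · rw [hg'O a haO] at ha
            rw [hg'nO b hbO] at hb
            have hca : c = a := (Option.some.inj ha).symm
            subst hca
            exact absurd (hbwd b c hb haO) hbO
          · rw [hg'O b hbO] at hb
            rw [hg'nO a haO] at ha
            have hcb : c = b := (Option.some.inj hb).symm
            subst hcb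
            exact absurd (hbwd a c ha hbO) haO
          · rw [hg'nO a haO] at ha; rw [hg'nO b hbO] at hb
            exact hg.1 a b c ha hb
        · apply hg.2.subset
          intro z hz
          by_cases hzO : z ∈ O
          · exact absurd (hg'O z hzO) hz
          · show g z ≠ some z
            rw [← hg'nO z hzO]
            exact hz
      have hcard' : (PB.supp g').ncard ≤ N := by
        have hlt : (PB.supp g').ncard < g.supp.ncard := by
          rw [hsuppg']
          apply Set.ncard_lt_ncard _ hg.2
          constructor
          · exact Set.diff_subset
          · intro hsub
            exact (hsub hx).2 hxO
        omega
      obtain ⟨L', hL'1, hL'2, hL'3, hL'4⟩ := ih g' hg'valid hcard'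
      refine ⟨q :: L', ?_, ?_, ?_, ?_⟩
      · intro p hp
        rcases List.mem_cons.mp hp with h | h
        · rw [h]; exact hshape
        · exact hL'1 p h
      · rw [List.pairwise_cons]
        refine ⟨?_, hL'2⟩
        intro t ht
        rw [Set.disjoint_left]
        intro z hz hzt
        have := hL'4 t ht hzt
        rw [hsuppg'] at this
        rw [hsuppq] at hz
        exact this.2 hz
      · rw [List.foldr_cons, hL'3]
        funext z
        show (g' z).bind q = g z
        by_cases hz : z ∈ O
        · rw [hg'O z hz]
          erw [Option.bind_some]
          exact hqg z hz
        · rw [hg'nO z hz]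
          cases hgz : g z with
          | none => rfl
          | some y =>
              erw [Option.bind_some]
              have hyO : y ∉ O := fun hyO => hz (hbwd z y hgz hyO)
              have : q y = some y := by
                by_contra hc
                have : y ∈ q.supp := hc
                rw [hsuppq] at this
                exact hyO this
              rw [this]
      · intro p hp
        rcases List.mem_cons.mp hp with h | h
        · rw [h, hsuppq]; exact hOsupp
        · intro z hz
          have := hL'4 p h hz
          rw [hsuppg'] at this
          exact this.1

lemma not_mem_supp {q : PB} {z : ℕ} (h : z ∉ q.supp) : q z = some z := not_not.mp h

lemma trivial_supp {q : PB} (h : IsTrivialQC q) : ∃ a, q a = none ∧ q.supp = {a} := by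
  obtain ⟨a, h1, h2⟩ := h
  refine ⟨a, h1, ?_⟩
  ext z
  constructor
  · intro hz
    by_contra hza
    exact hz (h2 z hza)
  · intro hz
    rw [Set.mem_singleton_iff] at hz
    subst hz
    show q z ≠ some z
    rw [h1]; simp
  
lemma supp_eq_image {q : PB} {n : ℕ} {v : ℕ → ℕ} (hn2 : 2 ≤ n)
    (hinj : Set.InjOn v (Set.Iio n))
    (hedge : ∀ i, i + 1 < n → q (v i) = some (v (i + 1)))
    (hend : q (v (n - 1)) = none ∨ q (v (n - 1)) = some (v 0))
    (hoff : ∀ x, (∀ i < n, x ≠ v i) → q x = some x) :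
    q.supp = v '' Set.Iio n := by
  ext z
  constructor
  · intro hz
    by_contra hzO
    refine hz (hoff z ?_)
    intro i hi hzi
    exact hzO ⟨i, hi, hzi.symm⟩
  · rintro ⟨i, hi, rfl⟩
    have hi' : i < n := hi
    show q (v i) ≠ some (v i)
    rcases Nat.lt_or_ge (i+1) n with h | h
    · rw [hedge i h]
      intro hc
      have := hinj (by exact h : (i+1) ∈ Set.Iio n) (by exact hi' : i ∈ Set.Iio n)
        (Option.some.inj hc)
      omega
    · have hieq : i = n - 1 := by omega
      subst hieq
      rcases hend with h1 | h1
      · rw [h1]; simp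
      · rw [h1]
        intro hc
        have := hinj (show (0:ℕ) ∈ Set.Iio n by simp; omega)
          (show n - 1 ∈ Set.Iio n by simp; omega) (Option.some.inj hc)
        omega

lemma shaped_nonempty {q : PB} (h : Shaped q) : q.supp.Nonempty := by
  rcases h with h | h | h
  · obtain ⟨a, _, hs⟩ := trivial_supp h
    rw [hs]; exact ⟨a, rfl⟩
  · obtain ⟨n, v, hn2, hinj, hedge, hend, hoff⟩ := h
    rw [supp_eq_image hn2 hinj hedge (Or.inl hend) hoff]
    exact ⟨v 0, 0, by simp; omega, rfl⟩
  · obtain ⟨n, v, hn2, hinj, hedge, hend, hoff⟩ := h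
    rw [supp_eq_image hn2 hinj hedge (Or.inr hend) hoff]
    exact ⟨v 0, 0, by simp; omega, rfl⟩

lemma shaped_closure {q : PB} (h : Shaped q) :
    ∀ x ∈ q.supp, ∀ y, q x = some y → y ∈ q.supp := by
  rcases h with h | h | h
  · obtain ⟨a, ha, hs⟩ := trivial_supp h
    intro x hx y hxy
    rw [hs, Set.mem_singleton_iff] at hx
    subst hx
    rw [ha] at hxy
    exact absurd hxy (by simp)
  · obtain ⟨n, v, hn2, hinj, hedge, hend, hoff⟩ := h
    have hs := supp_eq_image hn2 hinj hedge (Or.inl hend) hoff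
    intro x hx y hxy
    rw [hs] at hx ⊢
    obtain ⟨i, hi, rfl⟩ := hx
    have hi' : i < n := hi
    rcases Nat.lt_or_ge (i+1) n with hlt | hge
    · rw [hedge i hlt] at hxy
      exact ⟨i+1, hlt, (Option.some.inj hxy)⟩
    · have : i = n - 1 := by omega
      subst this
      rw [hend] at hxy
      exact absurd hxy (by simp)
  · obtain ⟨n, v, hn2, hinj, hedge, hend, hoff⟩ := h
    have hs := supp_eq_image hn2 hinj hedge (Or.inr hend) hoff
    intro x hx y hxy
    rw [hs] at hx ⊢
    obtain ⟨i, hi, rfl⟩ := hx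
    have hi' : i < n := hi
    rcases Nat.lt_or_ge (i+1) n with hlt | hge
    · rw [hedge i hlt] at hxy
      exact ⟨i+1, hlt, (Option.some.inj hxy)⟩
    · have : i = n - 1 := by omega
      subst this
      rw [hend] at hxy
      exact ⟨0, by simp; omega, (Option.some.inj hxy)⟩

/-- Intrinsic characterization of the factors of a decomposition. -/
def Factor (g q : PB) : Prop :=
  Shaped q ∧ (∀ x ∈ q.supp, q x = g x) ∧
    (∀ z y, g z = some y → y ∈ q.supp → z ∈ q.supp)

lemma factor_supp_sub {g q : PB} (hf : Factor g q) : q.supp ⊆ g.supp := by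
  intro x hx
  show g x ≠ some x
  rw [← hf.2.1 x hx]
  exact hx

lemma factor_fwd {g q : PB} (hf : Factor g q) :
    ∀ x ∈ q.supp, ∀ y, g x = some y → y ∈ q.supp := by
  intro x hx y hxy
  rw [← hf.2.1 x hx] at hxy
  exact shaped_closure hf.1 x hx y hxy

lemma subset_aux {g p q : PB} (hp : Factor g p)
    (hq21 : ∀ x ∈ q.supp, q x = g x)
    {n : ℕ} {v : ℕ → ℕ}
    (hedge : ∀ i, i + 1 < n → q (v i) = some (v (i + 1)))
    (hsupp : q.supp = v '' Set.Iio n)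
    {i0 : ℕ} (hi0 : i0 < n) (hxp : v i0 ∈ p.supp) : q.supp ⊆ p.supp := by
  have himg : ∀ i, i < n → v i ∈ q.supp := by
    intro i hi; rw [hsupp]; exact ⟨i, hi, rfl⟩
  have hgedge : ∀ i, i + 1 < n → g (v i) = some (v (i + 1)) := by
    intro i hi
    rw [← hq21 (v i) (himg i (by omega))]
    exact hedge i hi
  have hdown : ∀ k, v (i0 - k) ∈ p.supp := by
    intro k
    induction k with
    | zero => exact hxp
    | succ k ih =>
        rcases Nat.eq_zero_or_pos (i0 - k) with h0 | h0
        · rw [show i0 - (k+1) = i0 - k by omega]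
          exact ih
        · have hj : i0 - (k+1) + 1 = i0 - k := by omega
          have he : g (v (i0 - (k+1))) = some (v (i0 - k)) := by
            rw [← hj] at h0 ⊢
            exact hgedge _ (by omega)
          exact hp.2.2 _ _ he ih
  have h0 : v 0 ∈ p.supp := by
    have := hdown i0
    rwa [Nat.sub_self] at this
  have hup : ∀ i, i < n → v i ∈ p.supp := by
    intro i
    induction i with
    | zero => intro _; exact h0
    | succ i ih =>
        intro hi
        exact factor_fwd hp _ (ih (by omega)) _ (hgedge i hi)
  rw [hsupp]
  rintro z ⟨i, hi, rfl⟩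
  exact hup i hi

lemma factor_subset {g p q : PB} (hp : Factor g p) (hq : Factor g q)
    {x : ℕ} (hxp : x ∈ p.supp) (hxq : x ∈ q.supp) : q.supp ⊆ p.supp := by
  rcases hq.1 with h | h | h
  · obtain ⟨a, _, hs⟩ := trivial_supp h
    rw [hs] at hxq ⊢
    rw [Set.mem_singleton_iff] at hxq
    subst hxq
    intro z hz
    rw [Set.mem_singleton_iff] at hz
    subst hz
    exact hxp
  · obtain ⟨n, v, hn2, hinj, hedge, hend, hoff⟩ := h
    have hs := supp_eq_image hn2 hinj hedge (Or.inl hend) hoff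
    obtain ⟨i0, hi0, hvx⟩ := by rw [hs] at hxq; exact hxq
    subst hvx
    exact subset_aux hp hq.2.1 hedge hs hi0 hxp
  · obtain ⟨n, v, hn2, hinj, hedge, hend, hoff⟩ := h
    have hs := supp_eq_image hn2 hinj hedge (Or.inr hend) hoff
    obtain ⟨i0, hi0, hvx⟩ := by rw [hs] at hxq; exact hxq
    subst hvx
    exact subset_aux hp hq.2.1 hedge hs hi0 hxp

lemma factor_eq {g p q : PB} (hp : Factor g p) (hq : Factor g q)
    (hne : (p.supp ∩ q.supp).Nonempty) : p = q := by
  obtain ⟨x, hxp, hxq⟩ := hne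
  have h1 : q.supp ⊆ p.supp := factor_subset hp hq hxp hxq
  have h2 : p.supp ⊆ q.supp := factor_subset hq hp hxq hxp
  have hs : p.supp = q.supp := Set.Subset.antisymm h2 h1
  funext z
  by_cases hz : z ∈ p.supp
  · rw [hp.2.1 z hz, ← hq.2.1 z (hs ▸ hz)]
  · rw [not_mem_supp hz, not_mem_supp (fun hc => hz (h1 hc))]

lemma prod_notin (L : List PB) {x : ℕ} (h : ∀ q ∈ L, x ∉ q.supp) :
    L.foldr PB.mul PB.one x = some x := by
  induction L with
  | nil => rfl
  | cons p T ih =>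
      show (T.foldr PB.mul PB.one x).bind p = some x
      rw [ih (fun q hq => h q (List.mem_cons_of_mem p hq))]
      erw [Option.bind_some]
      exact not_mem_supp (h p (List.mem_cons_self))

lemma prod_mem (L : List PB) (hsh : ∀ q ∈ L, Shaped q)
    (hpw : L.Pairwise (fun p q => Disjoint (PB.supp p) (PB.supp q))) :
    ∀ q ∈ L, ∀ x ∈ q.supp, L.foldr PB.mul PB.one x = q x := by
  induction L with
  | nil => intro q hq; exact absurd hq List.not_mem_nil
  | cons p T ih =>
      rw [List.pairwise_cons] at hpw
      intro q hq x hx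
      show (T.foldr PB.mul PB.one x).bind p = q x
      rcases List.mem_cons.mp hq with hqp | hqT
      · subst hqp
        have hnotT : ∀ t ∈ T, x ∉ t.supp := by
          intro t ht hxt
          exact Set.disjoint_left.mp (hpw.1 t ht) hx hxt
        rw [prod_notin T hnotT]
        erw [Option.bind_some]
      · have hxp : x ∉ p.supp := by
          intro hxp
          exact Set.disjoint_left.mp (hpw.1 q hqT) hxp hx
        rw [ih (fun t ht => hsh t (List.mem_cons_of_mem p ht)) hpw.2 q hqT x hx]
        cases hqx : q x with
        | none => rfl
        | some y =>
            erw [Option.bind_some]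
            have hy : y ∈ q.supp := shaped_closure (hsh q hq) x hx y hqx
            have hyp : y ∉ p.supp := by
              intro hyp
              exact Set.disjoint_left.mp (hpw.1 q hqT) hyp hy
            exact not_mem_supp hyp

lemma supp_sub_union {g : PB} {L : List PB}
    (hprod : L.foldr PB.mul PB.one = g) :
    ∀ x ∈ g.supp, ∃ q ∈ L, x ∈ q.supp := by
  intro x hx
  by_contra hc
  push_neg at hc
  have := prod_notin L hc
  rw [hprod] at this
  exact hx this

lemma mem_factor {g : PB} {L : List PB}
    (hsh : ∀ q ∈ L, Shaped q)
    (hpw : L.Pairwise (fun p q => Disjoint (PB.supp p) (PB.supp q)))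
    (hprod : L.foldr PB.mul PB.one = g) :
    ∀ q, q ∈ L ↔ Factor g q := by
  have hagree : ∀ q ∈ L, ∀ x ∈ q.supp, q x = g x := by
    intro q hq x hx
    rw [← hprod]
    exact (prod_mem L hsh hpw q hq x hx).symm
  have hfwd : ∀ q ∈ L, Factor g q := by
    intro q hq
    refine ⟨hsh q hq, hagree q hq, ?_⟩
    intro z y hzy hyq
    by_cases hz : z ∈ g.supp
    · obtain ⟨p, hpL, hzp⟩ := supp_sub_union hprod z hz
      have hpz : p z = some y := by rw [hagree p hpL z hzp]; exact hzy
      have hyp : y ∈ p.supp := shaped_closure (hsh p hpL) z hzp y hpz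
      by_cases hpq : p = q
      · subst hpq; exact hzp
      · exfalso
        haveI : Std.Symm (fun p q : PB => Disjoint (PB.supp p) (PB.supp q)) := ⟨fun a b h => h.symm⟩
        have hd := hpw.forall hpL hq hpq
        exact Set.disjoint_left.mp hd hyp hyq
    · have : g z = some z := not_not.mp hz
      rw [this] at hzy
      rw [Option.some.inj hzy]
      exact hyq
  intro q
  constructor
  · exact hfwd q
  · intro hf
    obtain ⟨x, hx⟩ := shaped_nonempty hf.1
    have hxg : x ∈ g.supp := factor_supp_sub hf hx
    obtain ⟨p, hpL, hxp⟩ := supp_sub_union hprod x hxg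
    have : p = q := factor_eq (hfwd p hpL) hf ⟨x, hxp, hx⟩
    rw [← this]
    exact hpL

lemma decomp_nodup {L : List PB} (hsh : ∀ q ∈ L, Shaped q)
    (hpw : L.Pairwise (fun p q => Disjoint (PB.supp p) (PB.supp q))) :
    L.Nodup := by
  induction L with
  | nil => exact List.nodup_nil
  | cons p T ih =>
      rw [List.pairwise_cons] at hpw
      refine List.nodup_cons.mpr ⟨?_, ih (fun t ht => hsh t (List.mem_cons_of_mem p ht)) hpw.2⟩
      intro hpT
      have hd := hpw.1 p hpT
      obtain ⟨x, hx⟩ := shaped_nonempty (hsh p (List.mem_cons_self))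
      exact Set.disjoint_left.mp hd hx hx

end PBaux

/-- Every `r ∈ R_∞` has a decomposition, unique up to reordering,
into a product of factors with pairwise disjoint supports, each factor being a
trivial quasi-cycle, a nontrivial quasi-cycle, or a nontrivial usual cycle. -/
theorem stmt3 (g : PB) (hg : g.Valid) :
    ∃ L : List PB,
      (∀ q ∈ L, IsTrivialQC q ∨ IsQC q ∨ IsCyc q) ∧
      L.Pairwise (fun p q => Disjoint (PB.supp p) (PB.supp q)) ∧
      L.foldr PB.mul PB.one = g ∧
      ∀ L' : List PB,
        ((∀ q ∈ L', IsTrivialQC q ∨ IsQC q ∨ IsCyc q) ∧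
          L'.Pairwise (fun p q => Disjoint (PB.supp p) (PB.supp q)) ∧
          L'.foldr PB.mul PB.one = g) → L'.Perm L := by
  obtain ⟨L, h1, h2, h3, -⟩ := PBaux.exists_decomp_aux (g.supp.ncard) g hg le_rfl
  refine ⟨L, h1, h2, h3, ?_⟩
  rintro L' ⟨h1', h2', h3'⟩
  have hnd : L.Nodup := PBaux.decomp_nodup h1 h2
  have hnd' : L'.Nodup := PBaux.decomp_nodup h1' h2'
  rw [List.perm_ext_iff_of_nodup hnd' hnd]
  intro q
  rw [PBaux.mem_factor h1' h2' h3', PBaux.mem_factor h1 h2 h3]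
end

section
/- In the group algebra ℂ[R_n] of the finite symmetric inverse semigroup R_n, let p_n = Σ_{s ∈ S_n} s. Then the algebra p_n ℂ[R_n] p_n is commutative. -/
/-- The finite symmetric inverse semigroup `R_n` (partial bijections of `{1,…,n}`),
with composition as multiplication, is a monoid. -/
instance Rn.monoid (n : ℕ) : Monoid (PEquiv (Fin n) (Fin n)) where
  mul a b := a.trans b
  one := PEquiv.refl (Fin n)
  mul_assoc a b c := PEquiv.trans_assoc a b c
  one_mul a := PEquiv.refl_trans a
  mul_one a := PEquiv.trans_refl a

/-- The element `p_n = Σ_{s ∈ S_n} s` of the semigroup algebra `ℂ[R_n]`. -/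
noncomputable def pn (n : ℕ) : MonoidAlgebra ℂ (PEquiv (Fin n) (Fin n)) :=
  ∑ s : Equiv.Perm (Fin n), MonoidAlgebra.single s.toPEquiv (1 : ℂ)

namespace Stmt7Aux

open MonoidAlgebra

variable {n : ℕ}

lemma Rn.mul_def (a b : PEquiv (Fin n) (Fin n)) : a * b = a.trans b := rfl

lemma Rn.one_def : (1 : PEquiv (Fin n) (Fin n)) = PEquiv.refl (Fin n) := rfl

lemma trans_apply' (f g : PEquiv (Fin n) (Fin n)) (x : Fin n) :
    (f.trans g) x = (f x).bind g := rfl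

lemma toPEquiv_mul (s t : Equiv.Perm (Fin n)) :
    s.toPEquiv * t.toPEquiv = (t * s).toPEquiv := by
  rw [Rn.mul_def, ← Equiv.toPEquiv_trans]
  rfl

lemma toPEquiv_inv_mul (s : Equiv.Perm (Fin n)) :
    (s⁻¹).toPEquiv * s.toPEquiv = 1 := by
  rw [toPEquiv_mul, mul_inv_cancel]
  rw [Rn.one_def, ← Equiv.toPEquiv_refl]
  rfl

lemma toPEquiv_mul_inv (s : Equiv.Perm (Fin n)) :
    s.toPEquiv * (s⁻¹).toPEquiv = 1 := by
  rw [toPEquiv_mul, inv_mul_cancel]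
  rw [Rn.one_def, ← Equiv.toPEquiv_refl]
  rfl

/-- Every partial bijection extends to a permutation. -/
lemma exists_perm_ext (a : PEquiv (Fin n) (Fin n)) :
    ∃ s : Equiv.Perm (Fin n), ∀ x y : Fin n, a x = some y → s x = y := by
  classical
  set p : Fin n → Prop := fun x => (a x).isSome with hp
  set q : Fin n → Prop := fun y => (a.symm y).isSome with hq
  let e1 : { x // p x } ≃ { y // q y } :=
    { toFun := fun x => ⟨(a x.1).get x.2, by
        have : a.symm ((a x.1).get x.2) = some x.1 := by
          rw [PEquiv.eq_some_iff, Option.some_get]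
        simp [hq, this]⟩
      invFun := fun y => ⟨(a.symm y.1).get y.2, by
        have : a ((a.symm y.1).get y.2) = some y.1 := by
          rw [← PEquiv.eq_some_iff a, Option.some_get]
        simp [hp, this]⟩
      left_inv := fun x => by
        have h1 : a x.1 = some ((a x.1).get x.2) := (Option.some_get x.2).symm
        have h2 : a.symm ((a x.1).get x.2) = some x.1 := by
          rw [PEquiv.eq_some_iff]; exact h1
        ext
        simp [h2]
      right_inv := fun y => by
        have h1 : a.symm y.1 = some ((a.symm y.1).get y.2) := (Option.some_get y.2).symm
        have h2 : a ((a.symm y.1).get y.2) = some y.1 := by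
          rw [← PEquiv.eq_some_iff a]; exact h1
        ext
        simp [h2] }
  have hcard : Fintype.card { x // ¬ p x } = Fintype.card { y // ¬ q y } := by
    rw [Fintype.card_subtype_compl, Fintype.card_subtype_compl, Fintype.card_congr e1]
  let e2 : { x // ¬ p x } ≃ { y // ¬ q y } := Fintype.equivOfCardEq hcard
  refine ⟨(Equiv.sumCompl p).symm.trans ((e1.sumCongr e2).trans (Equiv.sumCompl q)), ?_⟩
  intro x y hxy
  have hpx : p x := by simp [hp, hxy]
  have : ((Equiv.sumCompl p).symm x) = Sum.inl ⟨x, hpx⟩ :=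
    Equiv.sumCompl_symm_apply_of_pos hpx
  simp only [Equiv.trans_apply, this, Equiv.sumCongr_apply, Sum.map_inl,
    Equiv.sumCompl_apply_inl]
  show (a x).get hpx = y
  simp [hxy]

/-- `a.symm` is a two-sided `S_n`-translate of `a`. -/
lemma exists_conj_symm (a : PEquiv (Fin n) (Fin n)) :
    ∃ s t : Equiv.Perm (Fin n),
      a.symm = s.toPEquiv * a * t.toPEquiv := by
  obtain ⟨u, hu⟩ := exists_perm_ext a
  refine ⟨u⁻¹, u⁻¹, ?_⟩
  rw [Rn.mul_def, Rn.mul_def]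
  apply PEquiv.ext
  intro y
  rw [trans_apply', trans_apply']
  rw [Equiv.toPEquiv_apply]
  show a.symm y = (a (u⁻¹ y)).bind (fun z => some (u⁻¹ z))
  rcases hsy : a.symm y with _ | x
  · -- a.symm y = none
    rcases hz : a (u⁻¹ y) with _ | z
    · simp [hz]
    · exfalso
      have : u (u⁻¹ y) = z := hu _ _ hz
      have hyz : z = y := by
        rw [← this]; simp
      rw [hyz] at hz
      have : a.symm y = some (u⁻¹ y) := by rw [PEquiv.eq_some_iff]; exact hz
      rw [hsy] at this; exact Option.some_ne_none _ this.symm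
  · -- a.symm y = some x
    have hax : a x = some y := (PEquiv.eq_some_iff a).mp hsy
    have hux : u x = y := hu _ _ hax
    have hxy : u⁻¹ y = x := by rw [← hux]; simp
    rw [hxy, hax]
    simp [hxy]
    exact hxy.symm

lemma single_mul_pn (s : Equiv.Perm (Fin n)) :
    MonoidAlgebra.single s.toPEquiv (1 : ℂ) * pn n = pn n := by
  unfold pn
  rw [Finset.mul_sum]
  refine Fintype.sum_equiv (Equiv.mulRight s) _ _ (fun t => ?_)
  rw [MonoidAlgebra.single_mul_single, one_mul, toPEquiv_mul]
  rfl

lemma pn_mul_single (s : Equiv.Perm (Fin n)) :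
    pn n * MonoidAlgebra.single s.toPEquiv (1 : ℂ) = pn n := by
  unfold pn
  rw [Finset.sum_mul]
  refine Fintype.sum_equiv (Equiv.mulLeft s) _ _ (fun t => ?_)
  rw [MonoidAlgebra.single_mul_single, one_mul, toPEquiv_mul]
  rfl

/-- Coefficients of a bi-invariant element are constant on `S_n`-double cosets. -/
lemma biinv_coeff {z : MonoidAlgebra ℂ (PEquiv (Fin n) (Fin n))}
    (hl : ∀ s : Equiv.Perm (Fin n), MonoidAlgebra.single s.toPEquiv (1 : ℂ) * z = z)
    (hr : ∀ s : Equiv.Perm (Fin n), z * MonoidAlgebra.single s.toPEquiv (1 : ℂ) = z)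
    (s t : Equiv.Perm (Fin n)) (a : PEquiv (Fin n) (Fin n)) :
    z.coeff (s.toPEquiv * a * t.toPEquiv) = z.coeff a := by
  have h1 : z.coeff (s.toPEquiv * a * t.toPEquiv)
      = z.coeff (a * t.toPEquiv) := by
    conv_lhs => rw [← hl s]
    rw [MonoidAlgebra.single_mul_apply_aux]
    · rw [one_mul]
    · intro c _
      constructor
      · intro h
        have h2 := congrArg (fun w => (s⁻¹).toPEquiv * w) h
        rw [← mul_assoc, toPEquiv_inv_mul, one_mul, ← mul_assoc, ← mul_assoc,
          toPEquiv_inv_mul, one_mul] at h2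
        exact h2
      · rintro rfl; rw [← mul_assoc]
  rw [h1]
  conv_lhs => rw [← hr t]
  rw [MonoidAlgebra.mul_single_apply_aux]
  · rw [mul_one]
  · intro c _
    constructor
    · intro h
      have h2 := congrArg (fun w => w * (t⁻¹).toPEquiv) h
      rw [mul_assoc, mul_assoc, toPEquiv_mul_inv, mul_one, mul_one] at h2
      exact h2
    · rintro rfl; rfl

/-- The anti-automorphism of `ℂ[R_n]` induced by `PEquiv.symm` (as an equiv on coefficients). -/
noncomputable def sigma (n : ℕ) : PEquiv (Fin n) (Fin n) ≃ PEquiv (Fin n) (Fin n) :=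
  ⟨PEquiv.symm, PEquiv.symm, fun a => PEquiv.symm_symm a, fun a => PEquiv.symm_symm a⟩

noncomputable def tau (z : MonoidAlgebra ℂ (PEquiv (Fin n) (Fin n))) :
    MonoidAlgebra ℂ (PEquiv (Fin n) (Fin n)) :=
  MonoidAlgebra.ofCoeff (Finsupp.equivMapDomain (sigma n) z.coeff)

lemma tau_add (u v : MonoidAlgebra ℂ (PEquiv (Fin n) (Fin n))) :
    tau (u + v) = tau u + tau v := by
  unfold tau
  ext a
  simp only [MonoidAlgebra.coeff_ofCoeff, MonoidAlgebra.coeff_add, Finsupp.add_apply,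
    Finsupp.equivMapDomain_apply]

lemma tau_single (a : PEquiv (Fin n) (Fin n)) (r : ℂ) :
    tau (MonoidAlgebra.single a r) = MonoidAlgebra.single a.symm r :=
  congrArg MonoidAlgebra.ofCoeff (Finsupp.equivMapDomain_single _ _ _)

lemma tau_zero : tau (0 : MonoidAlgebra ℂ (PEquiv (Fin n) (Fin n))) = 0 :=
  congrArg MonoidAlgebra.ofCoeff Finsupp.equivMapDomain_zero

lemma tau_antimul (u v : MonoidAlgebra ℂ (PEquiv (Fin n) (Fin n))) :
    tau (u * v) = tau v * tau u := by
  induction u using MonoidAlgebra.induction_linear with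
  | zero => simp [tau_zero]
  | add f g hf hg => rw [add_mul, tau_add, hf, hg, tau_add, mul_add]
  | single a r =>
    induction v using MonoidAlgebra.induction_linear with
    | zero => simp [tau_zero]
    | add f g hf hg => rw [mul_add, tau_add, hf, hg, tau_add, add_mul]
    | single b c =>
      rw [MonoidAlgebra.single_mul_single, tau_single, tau_single, tau_single,
        MonoidAlgebra.single_mul_single, mul_comm c r]
      congr 1

/-- A bi-invariant element is fixed by `tau`. -/
lemma tau_fix {z : MonoidAlgebra ℂ (PEquiv (Fin n) (Fin n))}
    (hl : ∀ s : Equiv.Perm (Fin n), MonoidAlgebra.single s.toPEquiv (1 : ℂ) * z = z)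
    (hr : ∀ s : Equiv.Perm (Fin n), z * MonoidAlgebra.single s.toPEquiv (1 : ℂ) = z) :
    tau z = z := by
  ext a
  unfold tau
  rw [MonoidAlgebra.coeff_ofCoeff, Finsupp.equivMapDomain_apply]
  show z.coeff ((sigma n).symm a) = z.coeff a
  have : (sigma n).symm a = a.symm := rfl
  rw [this]
  obtain ⟨s, t, hst⟩ := exists_conj_symm a
  rw [hst]
  exact biinv_coeff hl hr s t a

end Stmt7Aux

open Stmt7Aux in
/-- In the semigroup algebra `ℂ[R_n]` of the finite symmetric inverse
semigroup `R_n`, with `p_n = Σ_{s ∈ S_n} s`, the algebra `p_n ℂ[R_n] p_n` is commutative. -/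
theorem stmt7 (n : ℕ) (x y : MonoidAlgebra ℂ (PEquiv (Fin n) (Fin n))) :
    (pn n * x * pn n) * (pn n * y * pn n) = (pn n * y * pn n) * (pn n * x * pn n) := by
  have key : ∀ u : MonoidAlgebra ℂ (PEquiv (Fin n) (Fin n)),
      (∀ s : Equiv.Perm (Fin n),
        MonoidAlgebra.single s.toPEquiv (1 : ℂ) * (pn n * u * pn n) = pn n * u * pn n) ∧
      (∀ s : Equiv.Perm (Fin n),
        (pn n * u * pn n) * MonoidAlgebra.single s.toPEquiv (1 : ℂ) = pn n * u * pn n) := by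
    intro u
    constructor
    · intro s
      calc MonoidAlgebra.single s.toPEquiv (1 : ℂ) * (pn n * u * pn n)
          = (MonoidAlgebra.single s.toPEquiv (1 : ℂ) * pn n) * u * pn n := by
            rw [mul_assoc, mul_assoc, mul_assoc]
        _ = pn n * u * pn n := by rw [single_mul_pn]
    · intro s
      rw [mul_assoc, pn_mul_single]
  set z := pn n * x * pn n with hz
  set w := pn n * y * pn n with hw
  have hzfix : tau z = z := tau_fix (key x).1 (key x).2
  have hwfix : tau w = w := tau_fix (key y).1 (key y).2
  have hzwl : ∀ s : Equiv.Perm (Fin n),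
      MonoidAlgebra.single s.toPEquiv (1 : ℂ) * (z * w) = z * w := by
    intro s; rw [← mul_assoc, (key x).1 s]
  have hzwr : ∀ s : Equiv.Perm (Fin n),
      (z * w) * MonoidAlgebra.single s.toPEquiv (1 : ℂ) = z * w := by
    intro s; rw [mul_assoc, (key y).2 s]
  calc z * w = tau (z * w) := (tau_fix hzwl hzwr).symm
    _ = tau w * tau z := tau_antimul z w
    _ = w * z := by rw [hzfix, hwfix]
end

section
/- Let π be a unitary representation of S_∞ that is tame (its restriction to the subgroups S_{n∞} has the property that the union of the fixed subspaces H_π(n) is dense). Then for each i ∈ ℕ the operators π((i n)) converge in the weak operator topology as n → ∞ to an operator P_i, and P_i is an idempotent: P_i² = P_i. -/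
open scoped ComplexInnerProductSpace
open Filter Topology

/-- Finite (finitary) permutations of `ℕ`: the elements of `S_∞`. -/
def FinPerm (s : Equiv.Perm ℕ) : Prop := {x | s x ≠ x}.Finite

/-- Let `π` be a tame unitary representation of `S_∞` on a Hilbert
space `H` (tameness: for every `η` and `ε > 0` there is `N` with
`‖π((k n))η − η‖ < ε` for all `k, n > N`).  Then for each `i` the operators
`π((i n))` converge in the weak operator topology as `n → ∞` to an operator `P_i`,
and `P_i` is idempotent: `P_i² = P_i`. -/
theorem stmt8
    {H : Type*} [NormedAddCommGroup H] [InnerProductSpace ℂ H] [CompleteSpace H]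
    (π : Equiv.Perm ℕ → H →L[ℂ] H)
    (hmul : ∀ s t : Equiv.Perm ℕ, FinPerm s → FinPerm t → π (s * t) = π s ∘L π t)
    (hone : π 1 = 1)
    (hunitary : ∀ s : Equiv.Perm ℕ, FinPerm s → ∀ η : H, ‖π s η‖ = ‖η‖)
    (htame : ∀ η : H, ∀ ε > (0 : ℝ), ∃ N, ∀ k n, N < k → N < n → k ≠ n →
      ‖π (Equiv.swap k n) η - η‖ < ε)
    (i : ℕ) :
    ∃ P : H →L[ℂ] H,
      (∀ η ζ : H, Tendsto (fun n => ⟪π (Equiv.swap i n) η, ζ⟫) atTop (𝓝 ⟪P η, ζ⟫)) ∧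
      P ∘L P = P := by
  classical
  have hfin : ∀ a b : ℕ, FinPerm (Equiv.swap a b) := by
    intro a b
    apply Set.Finite.subset ((Set.finite_singleton b).insert a)
    intro x hx
    simp only [Set.mem_setOf_eq] at hx
    simp only [Set.mem_insert_iff, Set.mem_singleton_iff]
    by_contra hc
    push_neg at hc
    exact hx (Equiv.swap_apply_of_ne_of_ne hc.1 hc.2)
  have hinv : ∀ a b : ℕ, ∀ η : H, π (Equiv.swap a b) (π (Equiv.swap a b) η) = η := by
    intro a b η
    have h := hmul _ _ (hfin a b) (hfin a b)
    rw [Equiv.swap_mul_self, hone] at h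
    have h2 := congrFun (congrArg (fun (T : H →L[ℂ] H) => (T : H → H)) h.symm) η
    simpa using h2
  have hip : ∀ a b : ℕ, ∀ x y : H,
      ⟪π (Equiv.swap a b) x, π (Equiv.swap a b) y⟫ = ⟪x, y⟫ := by
    intro a b x y
    exact LinearIsometry.inner_map_map
      ⟨(π (Equiv.swap a b)).toLinearMap, hunitary _ (hfin a b)⟩ x y
  have hadj : ∀ a b : ℕ, ∀ x y : H,
      ⟪π (Equiv.swap a b) x, y⟫ = ⟪x, π (Equiv.swap a b) y⟫ := by
    intro a b x y
    conv_lhs => rw [← hinv a b y]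
    exact hip a b x _
  have hconj : ∀ n m : ℕ, i ≠ n → i ≠ m → n ≠ m →
      Equiv.swap i m = Equiv.swap n m * Equiv.swap i n * Equiv.swap n m := by
    intro n m hin him _
    have h := Equiv.swap_mul_swap_mul_swap hin him
    rw [h, Equiv.swap_comm]
  have hmix : ∀ n m : ℕ, i ≠ n → i ≠ m → n ≠ m →
      Equiv.swap i n * Equiv.swap i m = Equiv.swap i m * Equiv.swap n m := by
    intro n m hin _ hnm
    have h := Equiv.swap_mul_swap_mul_swap (Ne.symm hin) hnm
    have h2 : Equiv.swap i m * Equiv.swap n i = Equiv.swap m n * Equiv.swap i m := by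
      have h3 := congrArg (· * Equiv.swap i m) h
      simpa [mul_assoc] using h3
    have h3 := congrArg (·⁻¹) h2
    simpa [mul_inv_rev, Equiv.swap_comm n i, Equiv.swap_comm m n] using h3
  -- conjugation applied to π
  have hpimul : ∀ n m : ℕ, i ≠ n → i ≠ m → n ≠ m → ∀ x : H,
      π (Equiv.swap i m) x
        = π (Equiv.swap n m) (π (Equiv.swap i n) (π (Equiv.swap n m) x)) := by
    intro n m hin him hnm x
    have hfm : FinPerm (Equiv.swap n m * Equiv.swap i n) := by
      apply Set.Finite.subset ((hfin n m).union (hfin i n))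
      intro y hy
      simp only [Set.mem_setOf_eq, Set.mem_union] at hy ⊢
      by_contra hc
      push_neg at hc
      apply hy
      show Equiv.swap n m (Equiv.swap i n y) = y
      rw [hc.2, hc.1]
    rw [hconj n m hin him hnm, hmul _ _ hfm (hfin n m), hmul _ _ (hfin n m) (hfin i n)]
    rfl
  -- mixed product applied to π
  have hpimix : ∀ n m : ℕ, i ≠ n → i ≠ m → n ≠ m → ∀ x : H,
      π (Equiv.swap i n) (π (Equiv.swap i m) x)
        = π (Equiv.swap i m) (π (Equiv.swap n m) x) := by
    intro n m hin him hnm x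
    have h1 := hmul (Equiv.swap i n) (Equiv.swap i m) (hfin _ _) (hfin _ _)
    have h2 := hmul (Equiv.swap i m) (Equiv.swap n m) (hfin _ _) (hfin _ _)
    calc π (Equiv.swap i n) (π (Equiv.swap i m) x)
        = (π (Equiv.swap i n) ∘L π (Equiv.swap i m)) x := rfl
      _ = π (Equiv.swap i n * Equiv.swap i m) x := by rw [h1]
      _ = π (Equiv.swap i m * Equiv.swap n m) x := by rw [hmix n m hin him hnm]
      _ = π (Equiv.swap i m) (π (Equiv.swap n m) x) := by rw [h2]; rfl
  -- the key Cauchy estimate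
  have est : ∀ (η ζ : H) (ε : ℝ), 0 < ε → ∃ N : ℕ, ∀ n m : ℕ, N < n → N < m → n ≠ m →
      ‖(⟪π (Equiv.swap i m) η, ζ⟫ : ℂ) - ⟪π (Equiv.swap i n) η, ζ⟫‖ < ε := by
    intro η ζ ε hε
    set c : ℝ := ‖η‖ + ‖ζ‖ + 1 with hc
    have hcpos : 0 < c := by positivity
    obtain ⟨N₁, hN₁⟩ := htame η (ε / c) (by positivity)
    obtain ⟨N₂, hN₂⟩ := htame ζ (ε / c) (by positivity)
    refine ⟨max i (max N₁ N₂), ?_⟩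
    intro n m hn hm hnm
    have hin : i < n := lt_of_le_of_lt (le_max_left _ _) hn
    have him : i < m := lt_of_le_of_lt (le_max_left _ _) hm
    have hN₁n : N₁ < n := lt_of_le_of_lt (le_trans (le_max_left _ _) (le_max_right _ _)) hn
    have hN₁m : N₁ < m := lt_of_le_of_lt (le_trans (le_max_left _ _) (le_max_right _ _)) hm
    have hN₂n : N₂ < n := lt_of_le_of_lt (le_trans (le_max_right _ _) (le_max_right _ _)) hn
    have hN₂m : N₂ < m := lt_of_le_of_lt (le_trans (le_max_right _ _) (le_max_right _ _)) hm
    have e1 : (⟪π (Equiv.swap i m) η, ζ⟫ : ℂ)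
        = ⟪π (Equiv.swap i n) (π (Equiv.swap n m) η), π (Equiv.swap n m) ζ⟫ := by
      rw [hpimul n m hin.ne him.ne hnm η, hadj]
    have expand : (⟪π (Equiv.swap i n) (π (Equiv.swap n m) η), π (Equiv.swap n m) ζ⟫ : ℂ)
          - ⟪π (Equiv.swap i n) η, ζ⟫
        = ⟪π (Equiv.swap i n) (π (Equiv.swap n m) η - η), π (Equiv.swap n m) ζ⟫
          + ⟪π (Equiv.swap i n) η, π (Equiv.swap n m) ζ - ζ⟫ := by
      rw [map_sub, inner_sub_left, inner_sub_right]
      ring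
    rw [e1, expand]
    have b1 : ‖(⟪π (Equiv.swap i n) (π (Equiv.swap n m) η - η), π (Equiv.swap n m) ζ⟫ : ℂ)‖
        ≤ (ε / c) * ‖ζ‖ := by
      calc ‖(⟪π (Equiv.swap i n) (π (Equiv.swap n m) η - η), π (Equiv.swap n m) ζ⟫ : ℂ)‖
          ≤ ‖π (Equiv.swap i n) (π (Equiv.swap n m) η - η)‖ * ‖π (Equiv.swap n m) ζ‖ :=
            norm_inner_le_norm _ _
        _ = ‖π (Equiv.swap n m) η - η‖ * ‖ζ‖ := by
            rw [hunitary _ (hfin _ _), hunitary _ (hfin _ _)]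
        _ ≤ (ε / c) * ‖ζ‖ :=
            mul_le_mul_of_nonneg_right (le_of_lt (hN₁ n m hN₁n hN₁m hnm)) (norm_nonneg ζ)
    have b2 : ‖(⟪π (Equiv.swap i n) η, π (Equiv.swap n m) ζ - ζ⟫ : ℂ)‖ ≤ ‖η‖ * (ε / c) := by
      calc ‖(⟪π (Equiv.swap i n) η, π (Equiv.swap n m) ζ - ζ⟫ : ℂ)‖
          ≤ ‖π (Equiv.swap i n) η‖ * ‖π (Equiv.swap n m) ζ - ζ‖ := norm_inner_le_norm _ _
        _ = ‖η‖ * ‖π (Equiv.swap n m) ζ - ζ‖ := by rw [hunitary _ (hfin _ _)]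
        _ ≤ ‖η‖ * (ε / c) :=
            mul_le_mul_of_nonneg_left (le_of_lt (hN₂ n m hN₂n hN₂m hnm)) (norm_nonneg η)
    calc ‖(⟪π (Equiv.swap i n) (π (Equiv.swap n m) η - η), π (Equiv.swap n m) ζ⟫ : ℂ)
          + ⟪π (Equiv.swap i n) η, π (Equiv.swap n m) ζ - ζ⟫‖
        ≤ ‖(⟪π (Equiv.swap i n) (π (Equiv.swap n m) η - η), π (Equiv.swap n m) ζ⟫ : ℂ)‖
          + ‖(⟪π (Equiv.swap i n) η, π (Equiv.swap n m) ζ - ζ⟫ : ℂ)‖ := norm_add_le _ _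
      _ ≤ (ε / c) * ‖ζ‖ + ‖η‖ * (ε / c) := add_le_add b1 b2
      _ = (ε / c) * (‖η‖ + ‖ζ‖) := by ring
      _ < (ε / c) * c := by
          apply mul_lt_mul_of_pos_left _ (by positivity)
          rw [hc]; linarith
      _ = ε := div_mul_cancel₀ ε (ne_of_gt hcpos)
  -- convergence of the matrix coefficients
  have hconv : ∀ η ζ : H, ∃ L : ℂ,
      Tendsto (fun n => (⟪π (Equiv.swap i n) η, ζ⟫ : ℂ)) atTop (𝓝 L) := by
    intro η ζ
    apply cauchySeq_tendsto_of_complete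
    rw [Metric.cauchySeq_iff]
    intro ε hε
    obtain ⟨N, hN⟩ := est η ζ ε hε
    refine ⟨N + 1, ?_⟩
    intro m hm n hn
    by_cases h : m = n
    · simpa [h] using hε
    · rw [dist_eq_norm]
      exact hN n m (by omega) (by omega) (fun hh => h hh.symm)
  choose limf hlimf using hconv
  -- boundedness of the limit form
  have hbound : ∀ η ζ : H, ‖limf η ζ‖ ≤ ‖η‖ * ‖ζ‖ := by
    intro η ζ
    apply le_of_tendsto (hlimf η ζ).norm
    filter_upwards with n
    calc ‖(⟪π (Equiv.swap i n) η, ζ⟫ : ℂ)‖ ≤ ‖π (Equiv.swap i n) η‖ * ‖ζ‖ :=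
          norm_inner_le_norm _ _
      _ = ‖η‖ * ‖ζ‖ := by rw [hunitary _ (hfin _ _)]
  -- the limit functional, as a continuous linear map
  let F : H → (H →L[ℂ] ℂ) := fun η => LinearMap.mkContinuous
    { toFun := fun ζ => limf η ζ
      map_add' := fun ζ ζ' => tendsto_nhds_unique (hlimf η (ζ + ζ'))
        (by simpa [inner_add_right] using (hlimf η ζ).add (hlimf η ζ'))
      map_smul' := fun c ζ => tendsto_nhds_unique (hlimf η (c • ζ))
        (by simpa [inner_smul_right] using (hlimf η ζ).const_mul c) }
    ‖η‖ (fun ζ => hbound η ζ)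
  let P0 : H → H := fun η => (InnerProductSpace.toDual ℂ H).symm (F η)
  have hP0 : ∀ η ζ : H, (⟪P0 η, ζ⟫ : ℂ) = limf η ζ := fun η ζ =>
    InnerProductSpace.toDual_symm_apply
  have hP0add : ∀ η η' : H, P0 (η + η') = P0 η + P0 η' := by
    intro η η'
    apply ext_inner_right ℂ
    intro ζ
    rw [inner_add_left, hP0, hP0, hP0]
    exact tendsto_nhds_unique (hlimf (η + η') ζ)
      (by simpa [map_add, inner_add_left] using (hlimf η ζ).add (hlimf η' ζ))
  have hP0smul : ∀ (c : ℂ) (η : H), P0 (c • η) = c • P0 η := by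
    intro c η
    apply ext_inner_right ℂ
    intro ζ
    rw [inner_smul_left, hP0, hP0]
    exact tendsto_nhds_unique (hlimf (c • η) ζ)
      (by simpa [map_smul, inner_smul_left, mul_comm] using (hlimf η ζ).const_mul ((starRingEnd ℂ) c))
  have hP0norm : ∀ η : H, ‖P0 η‖ ≤ ‖η‖ := by
    intro η
    have h1 : ‖P0 η‖ = ‖F η‖ := (InnerProductSpace.toDual ℂ H).symm.norm_map (F η)
    rw [h1]
    exact LinearMap.mkContinuous_norm_le _ (norm_nonneg η) _
  let P : H →L[ℂ] H := LinearMap.mkContinuous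
    { toFun := P0, map_add' := hP0add, map_smul' := hP0smul } 1
    (fun η => by simpa using hP0norm η)
  have hPinner : ∀ η ζ : H, (⟪P η, ζ⟫ : ℂ) = limf η ζ := fun η ζ => hP0 η ζ
  have htend : ∀ η ζ : H,
      Tendsto (fun n => (⟪π (Equiv.swap i n) η, ζ⟫ : ℂ)) atTop (𝓝 ⟪P η, ζ⟫) := by
    intro η ζ
    rw [hPinner]
    exact hlimf η ζ
  refine ⟨P, htend, ?_⟩
  ext η
  show P (P η) = P η
  apply ext_inner_right ℂ
  intro ζ
  have key : ∀ ε : ℝ, 0 < ε → ‖(⟪P (P η), ζ⟫ : ℂ) - ⟪P η, ζ⟫‖ ≤ ε * ‖ζ‖ := by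
    intro ε hε
    obtain ⟨N₁, hN₁⟩ := htame η ε hε
    have claimA : ∀ n : ℕ, max i N₁ < n →
        ‖(⟪P η, π (Equiv.swap i n) ζ⟫ : ℂ) - ⟪P η, ζ⟫‖ ≤ ε * ‖ζ‖ := by
      intro n hn
      have hin : i < n := lt_of_le_of_lt (le_max_left _ _) hn
      have hN₁n : N₁ < n := lt_of_le_of_lt (le_max_right _ _) hn
      have hg := htend η (π (Equiv.swap i n) ζ)
      have hh := htend η ζ
      apply le_of_tendsto (hg.sub hh).norm
      filter_upwards [eventually_gt_atTop (max (max i N₁) n)] with m hm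
      have him : i < m := lt_of_le_of_lt (le_trans (le_max_left _ _) (le_max_left _ _)) hm
      have hN₁m : N₁ < m := lt_of_le_of_lt (le_trans (le_max_right _ _) (le_max_left _ _)) hm
      have hnm : n ≠ m := ne_of_lt (lt_of_le_of_lt (le_max_right _ _) hm)
      have e1 : (⟪π (Equiv.swap i m) η, π (Equiv.swap i n) ζ⟫ : ℂ)
          = ⟪π (Equiv.swap i m) (π (Equiv.swap n m) η), ζ⟫ := by
        rw [← hadj i n, hpimix n m hin.ne him.ne hnm η]
      rw [e1]
      have e3 : (⟪π (Equiv.swap i m) (π (Equiv.swap n m) η), ζ⟫ : ℂ)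
            - ⟪π (Equiv.swap i m) η, ζ⟫
          = ⟪π (Equiv.swap i m) (π (Equiv.swap n m) η - η), ζ⟫ := by
        rw [map_sub, inner_sub_left]
      rw [e3]
      calc ‖(⟪π (Equiv.swap i m) (π (Equiv.swap n m) η - η), ζ⟫ : ℂ)‖
          ≤ ‖π (Equiv.swap i m) (π (Equiv.swap n m) η - η)‖ * ‖ζ‖ := norm_inner_le_norm _ _
        _ = ‖π (Equiv.swap n m) η - η‖ * ‖ζ‖ := by rw [hunitary _ (hfin _ _)]
        _ ≤ ε * ‖ζ‖ :=
            mul_le_mul_of_nonneg_right (le_of_lt (hN₁ n m hN₁n hN₁m hnm)) (norm_nonneg ζ)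
    have hfinal : Tendsto (fun n => (⟪π (Equiv.swap i n) (P η), ζ⟫ : ℂ)) atTop
        (𝓝 ⟪P (P η), ζ⟫) := htend (P η) ζ
    have hfinal2 : Tendsto (fun n => (⟪P η, π (Equiv.swap i n) ζ⟫ : ℂ)) atTop
        (𝓝 ⟪P (P η), ζ⟫) := hfinal.congr (fun n => hadj i n _ _)
    apply le_of_tendsto (hfinal2.sub tendsto_const_nhds).norm
    filter_upwards [eventually_gt_atTop (max i N₁)] with n hn
    exact claimA n hn
  have h0 : ‖(⟪P (P η), ζ⟫ : ℂ) - ⟪P η, ζ⟫‖ ≤ 0 := by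
    apply le_of_forall_pos_le_add
    intro δ hδ
    have hε : 0 < δ / (‖ζ‖ + 1) := by positivity
    calc ‖(⟪P (P η), ζ⟫ : ℂ) - ⟪P η, ζ⟫‖ ≤ (δ / (‖ζ‖ + 1)) * ‖ζ‖ := key _ hε
      _ ≤ δ := by
          rw [div_mul_eq_mul_div, div_le_iff₀ (by positivity)]
          nlinarith [norm_nonneg ζ]
      _ ≤ 0 + δ := by linarith
  have h1 : (⟪P (P η), ζ⟫ : ℂ) - ⟪P η, ζ⟫ = 0 := by
    have := le_antisymm h0 (norm_nonneg _)
    rwa [norm_eq_zero] at this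
  exact sub_eq_zero.mp h1
end

section
/- With P_i = weak-lim_n π((i n)) for a tame representation π of S_∞, the following relations hold: (i) π(s) P_i π(s⁻¹) = P_{s(i)} for all s ∈ S_∞ and P_i P_k = P_k P_i for all i, k; (ii) if s ∈ S_A for a finite set A ⊂ ℕ, then π(s) · ∏_{i ∈ A} P_i = ∏_{i ∈ A} P_i. -/
open scoped ComplexInnerProductSpace
open Filter Topology

/-- Let `π` be a tame unitary representation of `S_∞` and
`P_i = weak-lim_n π((i n))`.  Then:
(i) `π(s) P_i π(s⁻¹) = P_{s(i)}` for all `s ∈ S_∞`, and the `P_i` pairwise commute;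
(ii) if `s` is supported in a finite set `A`, then `π(s) ⬝ ∏_{i ∈ A} P_i = ∏_{i ∈ A} P_i`
(the product over any enumeration `L` of `A`). -/
theorem stmt9
    {H : Type*} [NormedAddCommGroup H] [InnerProductSpace ℂ H] [CompleteSpace H]
    (π : Equiv.Perm ℕ → H →L[ℂ] H)
    (hmul : ∀ s t : Equiv.Perm ℕ, FinPerm s → FinPerm t → π (s * t) = π s ∘L π t)
    (hone : π 1 = 1)
    (hunitary : ∀ s : Equiv.Perm ℕ, FinPerm s → ∀ η : H, ‖π s η‖ = ‖η‖)
    (htame : ∀ η : H, ∀ ε > (0 : ℝ), ∃ N, ∀ k n, N < k → N < n → k ≠ n →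
      ‖π (Equiv.swap k n) η - η‖ < ε)
    (P : ℕ → H →L[ℂ] H)
    (hP : ∀ i, ∀ η ζ : H,
      Tendsto (fun n => ⟪π (Equiv.swap i n) η, ζ⟫) atTop (𝓝 ⟪P i η, ζ⟫)) :
    (∀ s : Equiv.Perm ℕ, FinPerm s → ∀ i, π s ∘L P i ∘L π s⁻¹ = P (s i)) ∧
    (∀ i k, P i ∘L P k = P k ∘L P i) ∧
    (∀ A : Finset ℕ, ∀ s : Equiv.Perm ℕ, (∀ j, j ∉ A → s j = j) →
      ∀ L : List ℕ, L.Nodup → (∀ j, j ∈ L ↔ j ∈ A) →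
        π s ∘L (L.map P).prod = (L.map P).prod) := by
  classical
  -- FinPerm basics
  have fswap : ∀ a b : ℕ, FinPerm (Equiv.swap a b) := by
    intro a b
    refine Set.Finite.subset ((Set.finite_singleton b).insert a) ?_
    intro x hx
    simp only [Set.mem_setOf_eq] at hx
    rcases eq_or_ne x a with rfl | hxa
    · exact Set.mem_insert _ _
    rcases eq_or_ne x b with rfl | hxb
    · exact Set.mem_insert_of_mem _ rfl
    exact absurd (Equiv.swap_apply_of_ne_of_ne hxa hxb) hx
  have fmul : ∀ s t : Equiv.Perm ℕ, FinPerm s → FinPerm t → FinPerm (s * t) := by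
    intro s t hs ht
    refine Set.Finite.subset (hs.union ht) ?_
    intro x hx
    simp only [Set.mem_setOf_eq, Equiv.Perm.mul_apply] at hx
    by_contra hmem
    simp only [Set.mem_union, Set.mem_setOf_eq, not_or, not_not] at hmem
    rw [hmem.2, hmem.1] at hx
    exact hx rfl
  have finv : ∀ s : Equiv.Perm ℕ, FinPerm s → FinPerm s⁻¹ := by
    intro s hs
    refine hs.subset ?_
    intro x hx
    simp only [Set.mem_setOf_eq] at hx ⊢
    intro h
    apply hx
    nth_rewrite 1 [← h]
    exact Equiv.symm_apply_apply s x
  -- representation basics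
  have pinv : ∀ s : Equiv.Perm ℕ, FinPerm s → ∀ x : H, π s⁻¹ (π s x) = x := by
    intro s hs x
    have h := hmul s⁻¹ s (finv s hs) hs
    rw [inv_mul_cancel, hone] at h
    calc π s⁻¹ (π s x) = (π s⁻¹ ∘L π s) x := rfl
      _ = (1 : H →L[ℂ] H) x := by rw [← h]
      _ = x := rfl
  have ppinv : ∀ s : Equiv.Perm ℕ, FinPerm s → ∀ x : H, π s (π s⁻¹ x) = x := by
    intro s hs x
    have := pinv s⁻¹ (finv s hs) x
    rwa [inv_inv] at this
  have hinner : ∀ s : Equiv.Perm ℕ, FinPerm s → ∀ x ζ : H, ⟪π s x, ζ⟫ = ⟪x, π s⁻¹ ζ⟫ := by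
    intro s hs x ζ
    have hiso : ∀ u v : H, ⟪π s u, π s v⟫ = ⟪u, v⟫ := fun u v =>
      LinearIsometry.inner_map_map ⟨(π s).toLinearMap, hunitary s hs⟩ u v
    calc ⟪π s x, ζ⟫ = ⟪π s x, π s (π s⁻¹ ζ)⟫ := by rw [ppinv s hs]
      _ = ⟪x, π s⁻¹ ζ⟫ := hiso _ _
  have hswap_inner : ∀ a b : ℕ, ∀ x ζ : H,
      ⟪π (Equiv.swap a b) x, ζ⟫ = ⟪x, π (Equiv.swap a b) ζ⟫ := by
    intro a b x ζ
    have := hinner (Equiv.swap a b) (fswap a b) x ζ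
    rwa [Equiv.swap_inv] at this
  -- Part (i)
  have part1 : ∀ s : Equiv.Perm ℕ, FinPerm s → ∀ i, π s ∘L P i ∘L π s⁻¹ = P (s i) := by
    intro s hs i
    obtain ⟨N, hN⟩ := hs.bddAbove
    have hfix : ∀ n, N < n → s n = n := by
      intro n hn
      by_contra h
      exact absurd (hN h) (not_le.mpr hn)
    ext η
    refine ext_inner_right ℂ fun ζ => ?_
    have h2 : Tendsto (fun n => ⟪π (Equiv.swap (s i) n) η, ζ⟫) atTop
        (𝓝 ⟪(π s ∘L P i ∘L π s⁻¹) η, ζ⟫) := by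
      have base : Tendsto (fun n => ⟪π (Equiv.swap i n) (π s⁻¹ η), π s⁻¹ ζ⟫) atTop
          (𝓝 ⟪P i (π s⁻¹ η), π s⁻¹ ζ⟫) := hP i _ _
      have hval : ⟪(π s ∘L P i ∘L π s⁻¹) η, ζ⟫ = ⟪P i (π s⁻¹ η), π s⁻¹ ζ⟫ := by
        show ⟪π s (P i (π s⁻¹ η)), ζ⟫ = _
        exact hinner s hs _ ζ
      rw [hval]
      refine base.congr' ?_
      filter_upwards [eventually_gt_atTop N] with n hn
      have hsw : Equiv.swap (s i) n = s * Equiv.swap i n * s⁻¹ := by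
        have h := Equiv.swap_apply_apply s i n
        rwa [hfix n hn] at h
      have hπ : π (Equiv.swap (s i) n) η = π s (π (Equiv.swap i n) (π s⁻¹ η)) := by
        rw [hsw, hmul _ _ (fmul s _ hs (fswap i n)) (finv s hs), hmul _ _ hs (fswap i n)]
        rfl
      rw [hπ, hinner s hs]
    exact tendsto_nhds_unique h2 (hP (s i) η ζ)
  have part1' : ∀ s : Equiv.Perm ℕ, FinPerm s → ∀ i, π s * P i = P (s i) * π s := by
    intro s hs i
    have h3 : π s⁻¹ * π s = 1 := by
      have h := hmul s⁻¹ s (finv s hs) hs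
      rw [inv_mul_cancel, hone] at h
      exact h.symm
    have h := part1 s hs i
    have h2 : (π s ∘L P i ∘L π s⁻¹) * π s = P (s i) * π s := by rw [h]
    calc π s * P i = π s * P i * (π s⁻¹ * π s) := by rw [h3, mul_one]
      _ = (π s ∘L P i ∘L π s⁻¹) * π s := by
        show π s * P i * (π s⁻¹ * π s) = π s * (P i * π s⁻¹) * π s
        rw [mul_assoc, mul_assoc, mul_assoc]
      _ = P (s i) * π s := h2
  -- Part (i') : commutation
  have part2 : ∀ i k, P i ∘L P k = P k ∘L P i := by
    intro i k
    rcases eq_or_ne i k with rfl | hik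
    · rfl
    ext η
    refine ext_inner_right ℂ fun ζ => ?_
    show ⟪P i (P k η), ζ⟫ = ⟪P k (P i η), ζ⟫
    have h1 : Tendsto (fun n => ⟪π (Equiv.swap i n) (P k η), ζ⟫) atTop
        (𝓝 ⟪P i (P k η), ζ⟫) := hP i _ ζ
    have h2 : Tendsto (fun n => ⟪π (Equiv.swap i n) (P k η), ζ⟫) atTop
        (𝓝 ⟪P k (P i η), ζ⟫) := by
      have base : Tendsto (fun n => ⟪π (Equiv.swap i n) η, ContinuousLinearMap.adjoint (P k) ζ⟫)
          atTop (𝓝 ⟪P i η, ContinuousLinearMap.adjoint (P k) ζ⟫) := hP i η _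
      have hb2 : Tendsto (fun n => ⟪P k (π (Equiv.swap i n) η), ζ⟫) atTop
          (𝓝 ⟪P k (P i η), ζ⟫) := by
        simpa only [ContinuousLinearMap.adjoint_inner_right] using base
      refine hb2.congr' ?_
      filter_upwards [eventually_gt_atTop (max i k)] with n hn
      have hki : k ≠ i := hik.symm
      have hkn : k ≠ n := ne_of_lt (lt_of_le_of_lt (le_max_right i k) hn)
      have hc := part1' (Equiv.swap i n) (fswap i n) k
      rw [Equiv.swap_apply_of_ne_of_ne hki hkn] at hc
      have happ := congrArg (fun f : H →L[ℂ] H => f η) hc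
      simp only [ContinuousLinearMap.mul_apply] at happ
      rw [happ]
    exact tendsto_nhds_unique h1 h2
  -- permutation identity
  have perm_id : ∀ a b n m : ℕ, a ≠ b → n ≠ a → n ≠ b → m ≠ a → m ≠ b → m ≠ n →
      Equiv.swap a b * (Equiv.swap a n * Equiv.swap b m)
        = (Equiv.swap a n * Equiv.swap b m) * Equiv.swap n m := by
    intro a b n m hab hna hnb hma hmb hmn
    have e1 : (Equiv.swap b m * Equiv.swap a n) a = n := by
      rw [Equiv.Perm.mul_apply, Equiv.swap_apply_left,
        Equiv.swap_apply_of_ne_of_ne hnb hmn.symm]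
    have e2 : (Equiv.swap b m * Equiv.swap a n) b = m := by
      rw [Equiv.Perm.mul_apply, Equiv.swap_apply_of_ne_of_ne hab.symm hnb.symm,
        Equiv.swap_apply_left]
    have key := Equiv.swap_apply_apply (Equiv.swap b m * Equiv.swap a n) a b
    rw [e1, e2, mul_inv_rev, Equiv.swap_inv, Equiv.swap_inv] at key
    rw [key]
    simp only [mul_assoc, Equiv.swap_mul_self_mul]
  -- key tame lemma
  have keyC : ∀ a b : ℕ, a ≠ b → π (Equiv.swap a b) ∘L (P a ∘L P b) = P a ∘L P b := by
    intro a b hab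
    ext η
    refine ext_inner_right ℂ fun ζ => ?_
    show ⟪π (Equiv.swap a b) (P a (P b η)), ζ⟫ = ⟪P a (P b η), ζ⟫
    have main : ∀ ε : ℝ, 0 < ε →
        ‖⟪π (Equiv.swap a b) (P a (P b η)), ζ⟫ - ⟪P a (P b η), ζ⟫‖ ≤ ε * ‖ζ‖ := by
      intro ε hε
      obtain ⟨N, hN⟩ := htame η ε hε
      have hval : ⟪π (Equiv.swap a b) (P a (P b η)), ζ⟫ - ⟪P a (P b η), ζ⟫
          = ⟪P a (P b η), π (Equiv.swap a b) ζ⟫ - ⟪P a (P b η), ζ⟫ := by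
        rw [hswap_inner]
      rw [hval]
      have hc : Tendsto (fun n => ⟪π (Equiv.swap a n) (P b η), π (Equiv.swap a b) ζ⟫
            - ⟪π (Equiv.swap a n) (P b η), ζ⟫) atTop
          (𝓝 (⟪P a (P b η), π (Equiv.swap a b) ζ⟫ - ⟪P a (P b η), ζ⟫)) :=
        (hP a (P b η) _).sub (hP a (P b η) ζ)
      refine le_of_tendsto hc.norm ?_
      filter_upwards [eventually_gt_atTop (max N (max a b))] with n hn
      have hNn : N < n := lt_of_le_of_lt (le_max_left _ _) hn
      have hna : n ≠ a := (lt_of_le_of_lt (le_trans (le_max_left a b) (le_max_right N _)) hn).ne'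
      have hnb : n ≠ b := (lt_of_le_of_lt (le_trans (le_max_right a b) (le_max_right N _)) hn).ne'
      have hval2 : ⟪π (Equiv.swap a n) (P b η), π (Equiv.swap a b) ζ⟫
            - ⟪π (Equiv.swap a n) (P b η), ζ⟫
          = ⟪P b η, π (Equiv.swap a n) (π (Equiv.swap a b) ζ)⟫
            - ⟪P b η, π (Equiv.swap a n) ζ⟫ := by
        rw [hswap_inner a n (P b η) (π (Equiv.swap a b) ζ), hswap_inner a n (P b η) ζ]
      rw [hval2]
      have hd : Tendsto (fun m => ⟪π (Equiv.swap b m) η, π (Equiv.swap a n) (π (Equiv.swap a b) ζ)⟫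
            - ⟪π (Equiv.swap b m) η, π (Equiv.swap a n) ζ⟫) atTop
          (𝓝 (⟪P b η, π (Equiv.swap a n) (π (Equiv.swap a b) ζ)⟫
            - ⟪P b η, π (Equiv.swap a n) ζ⟫)) :=
        (hP b η _).sub (hP b η _)
      refine le_of_tendsto hd.norm ?_
      filter_upwards [eventually_gt_atTop (max N (max n (max a b)))] with m hm
      have hNm : N < m := lt_of_le_of_lt (le_max_left _ _) hm
      have hmn : m ≠ n := (lt_of_le_of_lt (le_trans (le_max_left n _) (le_max_right N _)) hm).ne'
      have hma : m ≠ a := (lt_of_le_of_lt (le_trans (le_trans (le_max_left a b) (le_max_right n _)) (le_max_right N _)) hm).ne'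
      have hmb : m ≠ b := (lt_of_le_of_lt (le_trans (le_trans (le_max_right a b) (le_max_right n _)) (le_max_right N _)) hm).ne'
      have e1 : ⟪π (Equiv.swap b m) η, π (Equiv.swap a n) (π (Equiv.swap a b) ζ)⟫
          = ⟪π (Equiv.swap a b) (π (Equiv.swap a n) (π (Equiv.swap b m) η)), ζ⟫ := by
        rw [← hswap_inner a n, ← hswap_inner a b]
      have e2 : ⟪π (Equiv.swap b m) η, π (Equiv.swap a n) ζ⟫
          = ⟪π (Equiv.swap a n) (π (Equiv.swap b m) η), ζ⟫ :=
        (hswap_inner a n _ ζ).symm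
      rw [e1, e2]
      have h3 := perm_id a b n m hab hna hnb hma hmb hmn
      have hF : FinPerm (Equiv.swap a n * Equiv.swap b m) := fmul _ _ (fswap a n) (fswap b m)
      have lhs_eq : π (Equiv.swap a b) ∘L (π (Equiv.swap a n) ∘L π (Equiv.swap b m))
          = (π (Equiv.swap a n) ∘L π (Equiv.swap b m)) ∘L π (Equiv.swap n m) := by
        rw [← hmul _ _ (fswap a n) (fswap b m), ← hmul _ _ (fswap a b) hF, h3,
          hmul _ _ hF (fswap n m), hmul _ _ (fswap a n) (fswap b m)]
      have hid : π (Equiv.swap a b) (π (Equiv.swap a n) (π (Equiv.swap b m) η))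
          = π (Equiv.swap a n) (π (Equiv.swap b m) (π (Equiv.swap n m) η)) := by
        have := congrArg (fun f : H →L[ℂ] H => f η) lhs_eq
        simpa only [ContinuousLinearMap.comp_apply] using this
      rw [hid, ← inner_sub_left, ← map_sub, ← map_sub]
      calc ‖⟪π (Equiv.swap a n) (π (Equiv.swap b m) (π (Equiv.swap n m) η - η)), ζ⟫‖
          ≤ ‖π (Equiv.swap a n) (π (Equiv.swap b m) (π (Equiv.swap n m) η - η))‖ * ‖ζ‖ :=
            norm_inner_le_norm _ _
        _ = ‖π (Equiv.swap n m) η - η‖ * ‖ζ‖ := by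
            rw [hunitary _ (fswap a n), hunitary _ (fswap b m)]
        _ ≤ ε * ‖ζ‖ :=
            mul_le_mul_of_nonneg_right (hN n m hNn hNm hmn.symm).le (norm_nonneg ζ)
    have h0 : ‖⟪π (Equiv.swap a b) (P a (P b η)), ζ⟫ - ⟪P a (P b η), ζ⟫‖ ≤ 0 := by
      refine le_of_forall_pos_le_add fun ε hε => ?_
      have hζ : (0 : ℝ) < ‖ζ‖ + 1 := by positivity
      have hm := main (ε / (‖ζ‖ + 1)) (by positivity)
      have : ε / (‖ζ‖ + 1) * ‖ζ‖ ≤ ε := by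
        rw [div_mul_eq_mul_div, div_le_iff₀ hζ]
        nlinarith [norm_nonneg ζ]
      linarith
    rw [← sub_eq_zero]
    exact norm_le_zero_iff.mp h0
  -- pairwise commuting products
  have part2m : ∀ i k, P i * P k = P k * P i := fun i k => part2 i k
  have hpair : ∀ l : List ℕ, (l.map P).Pairwise Commute := by
    intro l
    induction l with
    | nil => simp
    | cons x xs ih =>
      simp only [List.map_cons, List.pairwise_cons]
      refine ⟨fun y hy => ?_, ih⟩
      obtain ⟨z, _, rfl⟩ := List.mem_map.mp hy
      exact part2m x z
  have lemD : ∀ (L : List ℕ), L.Nodup → ∀ a b, a ∈ L → b ∈ L → a ≠ b →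
      π (Equiv.swap a b) * (L.map P).prod = (L.map P).prod := by
    intro L hnd a b haL hbL hab
    have hbe : b ∈ L.erase a := (List.mem_erase_of_ne hab.symm).mpr hbL
    have hperm : L.Perm (a :: b :: (L.erase a).erase b) :=
      (List.perm_cons_erase haL).trans ((List.perm_cons_erase hbe).cons a)
    have hprod : (L.map P).prod = ((a :: b :: (L.erase a).erase b).map P).prod :=
      List.Perm.prod_eq' (hperm.map P) (hpair L)
    rw [hprod]
    simp only [List.map_cons, List.prod_cons]
    have hk : π (Equiv.swap a b) * (P a * P b) = P a * P b := by
      simpa only [ContinuousLinearMap.mul_def] using keyC a b hab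
    calc π (Equiv.swap a b) * (P a * (P b * (((L.erase a).erase b).map P).prod))
        = (π (Equiv.swap a b) * (P a * P b)) * (((L.erase a).erase b).map P).prod := by
          rw [mul_assoc, mul_assoc]
      _ = (P a * P b) * (((L.erase a).erase b).map P).prod := by rw [hk]
      _ = P a * (P b * (((L.erase a).erase b).map P).prod) := by rw [mul_assoc]
  -- Part (ii)
  have part3 : ∀ (L : List ℕ) (A : Finset ℕ), L.Nodup → (∀ j, j ∈ L ↔ j ∈ A) →
      ∀ n (s : Equiv.Perm ℕ), (∀ j, j ∉ A → s j = j) →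
        (A.filter fun j => s j ≠ j).card ≤ n →
        π s * (L.map P).prod = (L.map P).prod := by
    intro L A hnd hLA n
    induction n with
    | zero =>
      intro s hsA hcard
      have hs1 : s = 1 := by
        ext j
        by_cases hj : j ∈ A
        · by_contra h
          have hmem : j ∈ A.filter fun j => s j ≠ j := Finset.mem_filter.mpr ⟨hj, h⟩
          have := Finset.card_pos.mpr ⟨j, hmem⟩
          omega
        · exact hsA j hj
      rw [hs1, hone, one_mul]
    | succ n ih =>
      intro s hsA hcard
      by_cases hs1 : s = 1
      · rw [hs1, hone, one_mul]
      obtain ⟨a, ha⟩ : ∃ a, s a ≠ a := by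
        by_contra h
        push_neg at h
        exact hs1 (Equiv.ext h)
      have haA : a ∈ A := by
        by_contra h
        exact ha (hsA a h)
      set b := s a with hb
      have hbA : b ∈ A := by
        by_contra h
        have hbb : s b = b := hsA b h
        have hab2 : a = b := s.injective (by rw [← hb, hbb])
        exact ha hab2.symm
      have hba : b ≠ a := ha
      set t := Equiv.swap a b * s with ht
      have hta : t a = a := by
        rw [ht, Equiv.Perm.mul_apply, ← hb, Equiv.swap_apply_right]
      have htA : ∀ j, j ∉ A → t j = j := by
        intro j hj
        have hja : j ≠ a := fun h => hj (h ▸ haA)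
        have hjb : j ≠ b := fun h => hj (h ▸ hbA)
        rw [ht, Equiv.Perm.mul_apply, hsA j hj, Equiv.swap_apply_of_ne_of_ne hja hjb]
      have hsub : (A.filter fun j => t j ≠ j) ⊆ (A.filter fun j => s j ≠ j).erase a := by
        intro j hj
        rw [Finset.mem_filter] at hj
        rw [Finset.mem_erase, Finset.mem_filter]
        obtain ⟨hjA, hjt⟩ := hj
        have hja : j ≠ a := fun h => hjt (h ▸ hta)
        refine ⟨hja, hjA, ?_⟩
        intro hjs
        apply hjt
        rw [ht, Equiv.Perm.mul_apply, hjs]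
        rcases eq_or_ne j b with rfl | hjb
        · exfalso
          exact hba (s.injective (by rw [← hb, hjs])).symm
        · exact Equiv.swap_apply_of_ne_of_ne hja hjb
      have hcard' : (A.filter fun j => t j ≠ j).card ≤ n := by
        have h1 : ((A.filter fun j => s j ≠ j).erase a).card
            = (A.filter fun j => s j ≠ j).card - 1 :=
          Finset.card_erase_of_mem (Finset.mem_filter.mpr ⟨haA, ha⟩)
        have h2 := Finset.card_le_card hsub
        have h3 : 0 < (A.filter fun j => s j ≠ j).card :=
          Finset.card_pos.mpr ⟨a, Finset.mem_filter.mpr ⟨haA, ha⟩⟩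
        omega
      have hFs : FinPerm s := by
        refine Set.Finite.subset A.finite_toSet ?_
        intro x hx
        simp only [Set.mem_setOf_eq] at hx
        by_contra h
        exact hx (hsA x (by simpa using h))
      have hFt : FinPerm t := fmul _ _ (fswap a b) hFs
      have hst : s = Equiv.swap a b * t := by
        rw [ht, ← mul_assoc, Equiv.swap_mul_self, one_mul]
      have hπst : π s = π (Equiv.swap a b) * π t := by
        rw [hst, hmul _ _ (fswap a b) hFt]; rfl
      rw [hπst, mul_assoc, ih t htA hcard']
      exact lemD L hnd a b ((hLA a).mpr haA) ((hLA b).mpr hbA) hba.symm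
  refine ⟨part1, part2, ?_⟩
  intro A s hsA L hnd hLA
  exact part3 L A hnd hLA _ s hsA le_rfl
end
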